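/- arXiv:1708.09262 — 9 statements merged into one kernel-verified Lean document; each statement's English description precedes it below -/
import Mathlib

section
/- Let k be a field, p a prime number different from char k, and u ∈ k^× an element not of the form ζ·a^p for any root of unity ζ ∈ k of p-power order and a ∈ k^×. Then the polynomial X^p − u is irreducible over k. -/
theorem stmt0 {k : Type*} [Field k] (p : ℕ) (hp : p.Prime) (hchar : (p : k) ≠ 0)
    (u : k) (hu : u ≠ 0)
    (h : ¬ ∃ ζ a : k, (∃ m : ℕ, ζ ^ p ^ m = 1) ∧ u = ζ * a ^ p) :
    Irreducible (Polynomial.X ^ p - Polynomial.C u) := by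
  rw [X_pow_sub_C_irreducible_iff_of_prime hp]
  intro b hb
  exact h ⟨1, b, ⟨0, by simp⟩, by rw [one_mul, hb]⟩
end

section
/- Let k be a field, p a prime different from char k, and u ∈ k^× with u ∉ μ(k)_p·(k^×)^p. Let k₁ = k(t) where t is a root of X^p − u. Then the group of p-power roots of unity in k₁ equals that of k, i.e. μ(k₁)_p = μ(k)_p. -/
open Polynomial IntermediateField

theorem stmt1 {k K : Type*} [Field k] [Field K] [Algebra k K] (p : ℕ) (hp : p.Prime)
    (hchar : (p : k) ≠ 0) (u : k) (hu : u ≠ 0)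
    (h : ¬ ∃ ζ a : k, (∃ m : ℕ, ζ ^ p ^ m = 1) ∧ u = ζ * a ^ p)
    (t : K) (ht : t ^ p = algebraMap k K u)
    (hK : IntermediateField.adjoin k {t} = ⊤) :
    ∀ ζ : K, (∃ m : ℕ, ζ ^ p ^ m = 1) ↔
      ∃ ζ₀ : k, (∃ m : ℕ, ζ₀ ^ p ^ m = 1) ∧ ζ = algebraMap k K ζ₀ := by
  have hinj : Function.Injective (algebraMap k K) := (algebraMap k K).injective
  intro ζ
  constructor
  swap
  · rintro ⟨ζ₀, ⟨m, hm⟩, rfl⟩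
    exact ⟨m, by rw [← map_pow, hm, map_one]⟩
  rintro ⟨m, hm⟩
  by_cases hζk : ζ ∈ Set.range (algebraMap k K)
  · obtain ⟨ζ₀, rfl⟩ := hζk
    refine ⟨ζ₀, ⟨m, hinj ?_⟩, rfl⟩
    rw [map_pow, hm, map_one]
  exfalso
  -- basic setup
  have hirr : Irreducible ((X : k[X]) ^ p - C u) :=
    X_pow_sub_C_irreducible_of_prime hp
      (fun b hb => h ⟨1, b, ⟨0, by norm_num⟩, by rw [hb, one_mul]⟩)
  have htint : IsIntegral k t :=
    ⟨X ^ p - C u, monic_X_pow_sub_C u hp.ne_zero,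
      by rw [eval₂_sub, eval₂_pow, eval₂_X, eval₂_C, ht, sub_self]⟩
  have hmin : minpoly k t = X ^ p - C u :=
    (minpoly.eq_of_irreducible_of_monic hirr (by simp [ht])
      (monic_X_pow_sub_C u hp.ne_zero)).symm
  haveI hfd0 : FiniteDimensional k (adjoin k {t}) := adjoin.finiteDimensional htint
  rw [hK] at hfd0
  haveI hfd : FiniteDimensional k K :=
    LinearEquiv.finiteDimensional (IntermediateField.topEquiv (F := k) (E := K)).toLinearEquiv
  have hrank : Module.finrank k K = p := by
    rw [← finrank_top', ← hK, adjoin.finrank htint, hmin, natDegree_X_pow_sub_C]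
  -- order of ζ
  have hζ0 : ζ ≠ 0 := by
    intro h0
    rw [h0, zero_pow (pow_ne_zero m hp.ne_zero)] at hm
    exact zero_ne_one hm
  obtain ⟨s, hsm, hs⟩ := (Nat.dvd_prime_pow hp).mp (orderOf_dvd_of_pow_eq_one hm)
  have hs0 : s ≠ 0 := by
    rintro rfl
    rw [pow_zero] at hs
    exact hζk ⟨1, by rw [map_one, orderOf_eq_one_iff.mp hs]⟩
  obtain ⟨s', rfl⟩ : ∃ s', s = s' + 1 := ⟨s - 1, (Nat.sub_add_cancel (Nat.one_le_iff_ne_zero.mpr hs0)).symm⟩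
  have hζs : ζ ^ p ^ (s' + 1) = 1 := hs ▸ pow_orderOf_eq_one ζ
  have hprim : IsPrimitiveRoot ζ (p ^ (s' + 1)) := hs ▸ IsPrimitiveRoot.orderOf ζ
  have hζint : IsIntegral k ζ :=
    ⟨X ^ p ^ (s' + 1) - C 1, monic_X_pow_sub_C 1 (pow_ne_zero (s' + 1) hp.ne_zero),
      by rw [eval₂_sub, eval₂_pow, eval₂_X, eval₂_C, hζs, map_one, sub_self]⟩
  -- K = k(ζ)
  have hFtop : adjoin k {ζ} = ⊤ := by
    have hdvd : Module.finrank k (adjoin k {ζ}) ∣ p :=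
      ⟨Module.finrank (adjoin k {ζ}) K, by
        rw [← hrank, Module.finrank_mul_finrank]⟩
    rcases hp.eq_one_or_self_of_dvd _ hdvd with h1 | hpr
    · exact absurd ((IntermediateField.finrank_eq_one_iff.mp h1) ▸
        mem_adjoin_simple_self k ζ) (by rwa [IntermediateField.mem_bot])
    · exact IntermediateField.eq_of_le_of_finrank_eq le_top
        (by rw [finrank_top', hrank, hpr])
  have hAζ : (Algebra.adjoin k {ζ} : Subalgebra k K) = ⊤ := by
    have h1 := adjoin_simple_toSubalgebra_of_isAlgebraic hζint.isAlgebraic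
    rw [hFtop, top_toSubalgebra] at h1
    exact h1.symm
  have hAt : (Algebra.adjoin k {t} : Subalgebra k K) = ⊤ := by
    have h1 := adjoin_simple_toSubalgebra_of_isAlgebraic htint.isAlgebraic
    rw [hK, top_toSubalgebra] at h1
    exact h1.symm
  -- K/k is Galois
  have hsep : ((X : k[X]) ^ p ^ (s' + 1) - C 1).Separable :=
    separable_X_pow_sub_C 1 (by rw [Nat.cast_pow]; exact pow_ne_zero (s' + 1) hchar) one_ne_zero
  have hsf : IsSplittingField k K ((X : k[X]) ^ p ^ (s' + 1) - C 1) := by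
    constructor
    · skip
      have h2 := X_pow_sub_C_splits_of_isPrimitiveRoot hprim (one_pow (p ^ (s' + 1)))
      simpa using h2
    · rw [eq_top_iff, ← hAζ]
      apply Algebra.adjoin_mono
      rintro x rfl
      rw [mem_rootSet]
      exact ⟨(monic_X_pow_sub_C 1 (pow_ne_zero (s' + 1) hp.ne_zero)).ne_zero,
        by simp [hζs]⟩
  haveI hgal : IsGalois k K := by haveI := hsf; exact IsGalois.of_separable_splitting_field hsep
  have hcard : Fintype.card (K ≃ₐ[k] K) = p := by
    rw [← Nat.card_eq_fintype_card, IsGalois.card_aut_eq_finrank, hrank]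
  obtain ⟨σ, hσ1⟩ : ∃ σ : K ≃ₐ[k] K, σ ≠ 1 :=
    Fintype.exists_ne_of_one_lt_card (by rw [hcard]; exact hp.one_lt) 1
  -- σ generates
  have hσtop : Subgroup.zpowers σ = ⊤ := by
    apply Subgroup.eq_top_of_card_eq
    rw [Nat.card_zpowers, Nat.card_eq_fintype_card, hcard]
    rcases hp.eq_one_or_self_of_dvd _ (hcard ▸ orderOf_dvd_card (x := σ)) with h1 | hpr
    · exact absurd (orderOf_eq_one_iff.mp h1) hσ1
    · exact hpr
  have hfixrange : ∀ x : K, σ x = x → ∃ y : k, algebraMap k K y = x := by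
    intro x hx
    have hxfix : ∀ τ : K ≃ₐ[k] K, τ x = x := by
      intro τ
      have hτ : τ ∈ Subgroup.zpowers σ := hσtop ▸ Subgroup.mem_top τ
      obtain ⟨n, hn⟩ := (isOfFinOrder_of_finite σ).mem_powers_iff_mem_zpowers.mpr hτ
      have hn' : σ ^ n = τ := hn
      rw [← hn']
      clear hn hn'
      induction n with
      | zero => simp
      | succ n ih => rw [pow_succ, AlgEquiv.mul_apply, hx, ih]
    have hmem : x ∈ IntermediateField.fixedField (⊤ : Subgroup (K ≃ₐ[k] K)) :=
      fun g => hxfix g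
    have hbot : IntermediateField.fixedField (⊤ : Subgroup (K ≃ₐ[k] K)) = ⊥ :=
      ((IsGalois.tfae (F := k) (E := K)).out 0 1).mp hgal
    rw [hbot, IntermediateField.mem_bot] at hmem
    exact hmem
  -- if σ fixes a generator, σ = 1
  have hgen : ∀ x : K, (Algebra.adjoin k {x} : Subalgebra k K) = ⊤ → σ x = x → σ = 1 := by
    intro x hx hfix
    have hle : (⊤ : Subalgebra k K) ≤ AlgHom.equalizer (σ : K →ₐ[k] K) ((1 : K ≃ₐ[k] K) : K →ₐ[k] K) := by
      rw [← hx]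
      apply Algebra.adjoin_le
      rintro y rfl
      exact hfix
    exact AlgEquiv.coe_algHom_injective (AlgHom.equalizer_eq_top.mp (top_le_iff.mp hle))
  have ht0 : t ≠ 0 := by
    intro h0
    rw [h0, zero_pow hp.ne_zero] at ht
    exact hu (hinj (by rw [← ht, map_zero]))
  -- cocycles
  set δ : K := σ ζ * ζ⁻¹ with hδdef
  have hσζ : σ ζ = δ * ζ := by
    rw [hδdef, mul_assoc, inv_mul_cancel₀ hζ0, mul_one]
  have hδs : δ ^ p ^ (s' + 1) = 1 := by
    rw [hδdef, mul_pow, ← map_pow, hζs, map_one, one_mul, inv_pow, hζs, inv_one]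
  have hδ1 : δ ≠ 1 := by
    intro h1
    exact hσ1 (hgen ζ hAζ ((mul_inv_eq_one₀ hζ0).mp (hδdef ▸ h1)))
  obtain ⟨r, hrs, hr⟩ := (Nat.dvd_prime_pow hp).mp (orderOf_dvd_of_pow_eq_one hδs)
  have hr0 : r ≠ 0 := by
    rintro rfl
    rw [pow_zero] at hr
    exact hδ1 (orderOf_eq_one_iff.mp hr)
  set δ' : K := δ ^ p ^ (r - 1) with hδ'def
  have hδ'p : δ' ^ p = 1 := by
    rw [hδ'def, ← pow_mul, ← pow_succ, Nat.sub_add_cancel (Nat.one_le_iff_ne_zero.mpr hr0),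
      ← hr, pow_orderOf_eq_one]
  have hδ'1 : δ' ≠ 1 := by
    intro h1
    have hd : p ^ r ∣ p ^ (r - 1) := hr ▸ orderOf_dvd_of_pow_eq_one h1
    have := (Nat.pow_dvd_pow_iff_le_right hp.one_lt).mp hd
    omega
  have hδ'ord : orderOf δ' = p := by
    rcases hp.eq_one_or_self_of_dvd _ (orderOf_dvd_of_pow_eq_one hδ'p) with h1 | hpr
    · exact absurd (orderOf_eq_one_iff.mp h1) hδ'1
    · exact hpr
  have hδ'prim : IsPrimitiveRoot δ' p := hδ'ord ▸ IsPrimitiveRoot.orderOf δ'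
  set ω : K := σ t * t⁻¹ with hωdef
  have hσt : σ t = ω * t := by
    rw [hωdef, mul_assoc, inv_mul_cancel₀ ht0, mul_one]
  have hωp : ω ^ p = 1 := by
    rw [hωdef, mul_pow, ← map_pow, ht, AlgEquiv.commutes, inv_pow, ht,
      mul_inv_cancel₀ (fun h0 => hu (hinj (by rw [h0, map_zero])))]
  have hω1 : ω ≠ 1 := by
    intro h1
    exact hσ1 (hgen t hAt ((mul_inv_eq_one₀ ht0).mp (hωdef ▸ h1)))
  have hω0 : ω ≠ 0 := by
    intro h0
    rw [h0, zero_pow hp.ne_zero] at hωp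
    exact zero_ne_one hωp
  haveI : NeZero p := ⟨hp.ne_zero⟩
  obtain ⟨i, _, hi⟩ := hδ'prim.eq_pow_of_pow_eq_one hωp
  set b : ℕ := p ^ (r - 1) * i with hbdef
  have hbδ : δ ^ b = ω := by rw [hbdef, pow_mul, ← hδ'def, hi]
  -- the fixed element
  set x : K := t * (ζ ^ b)⁻¹ with hxdef
  have hσx : σ x = x := by
    have h2 : σ x = ω * t * ((δ * ζ) ^ b)⁻¹ := by
      rw [hxdef, map_mul, map_inv₀, map_pow, hσζ, hσt]
    rw [h2, mul_pow, hbδ, mul_inv, hxdef,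
      show ω * t * (ω⁻¹ * (ζ ^ b)⁻¹) = ω * ω⁻¹ * (t * (ζ ^ b)⁻¹) by ring,
      mul_inv_cancel₀ hω0, one_mul]
  obtain ⟨y, hy⟩ := hfixrange x hσx
  have hy0 : y ≠ 0 := by
    rintro rfl
    rw [map_zero] at hy
    exact mul_ne_zero ht0 (inv_ne_zero (pow_ne_zero b hζ0)) hy.symm
  have hxt : t = algebraMap k K y * ζ ^ b := by
    rw [hy, hxdef, mul_assoc, inv_mul_cancel₀ (pow_ne_zero b hζ0), mul_one]
  set z : k := u / y ^ p with hzdef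
  have hz : algebraMap k K z = (ζ ^ b) ^ p := by
    have hup : algebraMap k K u = algebraMap k K (y ^ p) * (ζ ^ b) ^ p := by
      rw [← ht, hxt, mul_pow, map_pow]
    rw [hzdef, map_div₀, hup]
    exact mul_div_cancel_left₀ _ ((map_ne_zero_iff _ hinj).mpr (pow_ne_zero p hy0))
  have hz1 : z ^ p ^ s' = 1 := by
    apply hinj
    rw [map_pow, hz, map_one, ← pow_mul, ← pow_mul,
      show b * (p * p ^ s') = p ^ (s' + 1) * b by ring,
      pow_mul, hζs, one_pow]
  exact h ⟨z, y, ⟨s', hz1⟩, by rw [hzdef, div_mul_cancel₀ u (pow_ne_zero p hy0)]⟩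
end

section
/- Let k be a field, p a prime different from char k, and u ∈ k^× with u ∉ μ(k)_p·(k^×)^p. Let t be a root of X^p − u in an algebraic closure and k₁ = k(t). Then t ∉ μ(k₁)_p·(k₁^×)^p. -/
open Polynomial

theorem stmt2 {k K : Type*} [Field k] [Field K] [Algebra k K] (p : ℕ) (hp : p.Prime)
    (hchar : (p : k) ≠ 0) (u : k) (hu : u ≠ 0)
    (h : ¬ ∃ ζ a : k, (∃ m : ℕ, ζ ^ p ^ m = 1) ∧ u = ζ * a ^ p)
    (t : K) (ht : t ^ p = algebraMap k K u)
    (hK : IntermediateField.adjoin k {t} = ⊤) :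
    ¬ ∃ ζ a : K, (∃ m : ℕ, ζ ^ p ^ m = 1) ∧ t = ζ * a ^ p := by
  classical
  rintro ⟨ζ, a, ⟨m, hζ⟩, hta⟩
  have hp0 : p ≠ 0 := hp.ne_zero
  have hirr : Irreducible (X ^ p - C u) := by
    apply X_pow_sub_C_irreducible_of_prime hp
    intro b hb
    exact h ⟨1, b, ⟨0, by simp⟩, by simp [hb]⟩
  have hmonic : (X ^ p - C u).Monic := monic_X_pow_sub_C _ hp0
  have haev : Polynomial.aeval t (X ^ p - C u) = 0 := by
    simp [ht]
  have hint : IsIntegral k t := ⟨X ^ p - C u, hmonic, by simpa using haev⟩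
  have hmin : minpoly k t = X ^ p - C u :=
    (minpoly.eq_of_irreducible_of_monic hirr haev hmonic).symm
  have hfd0 : FiniteDimensional k (IntermediateField.adjoin k {t}) :=
    IntermediateField.adjoin.finiteDimensional hint
  let e : (IntermediateField.adjoin k {t}) ≃ₐ[k] K :=
    (IntermediateField.equivOfEq hK).trans IntermediateField.topEquiv
  have hfd : FiniteDimensional k K := LinearEquiv.finiteDimensional e.toLinearEquiv
  let pb : PowerBasis k K := (IntermediateField.adjoin.powerBasis hint).map e
  have hgen : pb.gen = t := by
    simp [pb, e, IntermediateField.adjoin.powerBasis]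
  have hdim : pb.dim = p := by
    have : pb.dim = (minpoly k t).natDegree := by
      simp [pb, IntermediateField.adjoin.powerBasis]
    rw [this, hmin]
    simp [natDegree_X_pow_sub_C]
  have hnormt : Algebra.norm k t = (-1) ^ (p + 1) * u := by
    have := Algebra.PowerBasis.norm_gen_eq_coeff_zero_minpoly pb
    rw [hgen, hdim, hmin] at this
    rw [this]
    have hc : (X ^ p - C u).coeff 0 = -u := by
      simp [coeff_X_pow, Ne.symm hp0]
    rw [hc]
    ring
  have hNζ : (Algebra.norm k ζ) ^ p ^ m = 1 := by
    rw [← map_pow, hζ, map_one]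
  have hnorm_eq : Algebra.norm k t = Algebra.norm k ζ * (Algebra.norm k a) ^ p := by
    rw [hta, map_mul, map_pow]
  apply h
  refine ⟨(-1) ^ (p + 1) * Algebra.norm k ζ, Algebra.norm k a, ⟨m + 1, ?_⟩, ?_⟩
  · have heven : Even ((p + 1) * p ^ (m + 1)) := by
      rcases hp.eq_two_or_odd' with h2 | hodd
      · subst h2
        have h2e : Even (2 ^ (m + 1)) := ⟨2 ^ m, by ring⟩
        exact h2e.mul_left _
      · exact (Odd.add_one hodd).mul_right _
    rw [mul_pow, ← pow_mul, Even.neg_one_pow heven, one_mul,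
      pow_succ, pow_mul, hNζ, one_pow]
  · have hsq : ((-1 : k) ^ (p + 1)) * ((-1 : k) ^ (p + 1)) = 1 := by
      rw [← pow_add]
      exact Even.neg_one_pow ⟨p + 1, rfl⟩
    have : ((-1 : k) ^ (p + 1)) * Algebra.norm k t = u := by
      rw [hnormt, ← mul_assoc, hsq, one_mul]
    rw [← this, hnorm_eq]; ring
end

section
/- Let k be a field, p a prime different from char k, and u ∈ k^× with u ∉ μ(k)_p·(k^×)^p. For an integer d ≥ 1 let t be a root of X^{p^d} − u and k_d = k(t). Then [k_d : k] = p^d and μ(k_d)_p = μ(k)_p. -/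
open Polynomial IntermediateField

lemma adjoin_gen_top' {F E : Type*} [Field F] [Field E] [Algebra F E] (s : E) :
    IntermediateField.adjoin F {IntermediateField.AdjoinSimple.gen F s} = ⊤ := by
  apply IntermediateField.map_injective (F⟮s⟯.val)
  rw [IntermediateField.adjoin_map, ← AlgHom.fieldRange_eq_map, fieldRange_val]
  simp [Set.image_singleton, IntermediateField.AdjoinSimple.coe_gen]

lemma step {k K : Type*} [Field k] [Field K] [Algebra k K] {p : ℕ} (hp : p.Prime)
    {u : k} (hu : u ≠ 0)
    (hgood : ¬ ∃ ζ a : k, (∃ m : ℕ, ζ ^ p ^ m = 1) ∧ u = ζ * a ^ p)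
    {t : K} (ht : t ^ p = algebraMap k K u)
    (hK : IntermediateField.adjoin k {t} = ⊤) :
    Module.finrank k K = p ∧
    (∀ ζ : K, (∃ m : ℕ, ζ ^ p ^ m = 1) → ∃ ζ₀ : k, ζ = algebraMap k K ζ₀) ∧
    ¬ ∃ ζ a : K, (∃ m : ℕ, ζ ^ p ^ m = 1) ∧ t = ζ * a ^ p := by
  have hinj : Function.Injective (algebraMap k K) := (algebraMap k K).injective
  have hpne : p ≠ 0 := hp.ne_zero
  -- irreducibility
  have hirr : Irreducible (X ^ p - C u) := by
    apply X_pow_sub_C_irreducible_of_prime hp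
    intro b hb
    exact hgood ⟨1, b, ⟨0, by simp⟩, by simp [hb]⟩
  have hmonic : (X ^ p - C u).Monic := monic_X_pow_sub_C u hpne
  have haev : (aeval t) (X ^ p - C u) = 0 := by simp [ht]
  have hmt : minpoly k t = X ^ p - C u := (minpoly.eq_of_irreducible_of_monic hirr haev hmonic).symm
  have hint : IsIntegral k t := ⟨X ^ p - C u, hmonic, by simpa using haev⟩
  have fd1 : FiniteDimensional k (⊤ : IntermediateField k K) :=
    hK ▸ IntermediateField.adjoin.finiteDimensional hint
  have fd : FiniteDimensional k K :=
    Module.Finite.equiv (IntermediateField.topEquiv (F := k) (E := K)).toLinearEquiv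
  have hfin : Module.finrank k K = p := by
    have h1 : Module.finrank k ↥(adjoin k {t}) = p := by
      rw [IntermediateField.adjoin.finrank hint, hmt, natDegree_X_pow_sub_C]
    rw [← IntermediateField.finrank_top' (F := k) (E := K), ← hK]
    exact h1
  have ht0 : t ≠ 0 := by
    intro h0
    apply hu
    apply hinj
    rw [← ht, h0, map_zero, zero_pow hpne]
  -- key
  have key : ∀ x : K, (∀ y : k, algebraMap k K y ≠ x) →
      (minpoly k x).natDegree = p ∧ ∃ pb : PowerBasis k K, pb.gen = x ∧ pb.dim = p := by
    intro x hx
    have hix : IsIntegral k x := Algebra.IsIntegral.isIntegral x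
    have h1 : Module.finrank k ↥(adjoin k {x}) = (minpoly k x).natDegree :=
      IntermediateField.adjoin.finrank hix
    have hdvd : Module.finrank k ↥(adjoin k {x}) ∣ p :=
      ⟨Module.finrank ↥(adjoin k {x}) K,
        ((Module.finrank_mul_finrank k ↥(adjoin k {x}) K).trans hfin).symm⟩
    rcases (hp.eq_one_or_self_of_dvd _ hdvd) with h | h
    · exfalso
      have hb : adjoin k {x} = ⊥ := IntermediateField.finrank_eq_one_iff.mp h
      have hx' : x ∈ (⊥ : IntermediateField k K) := hb ▸ mem_adjoin_simple_self k x
      rcases IntermediateField.mem_bot.mp hx' with ⟨y, hy⟩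
      exact hx y hy
    · have htop : adjoin k {x} = ⊤ :=
        IntermediateField.eq_of_le_of_finrank_eq le_top (by rw [h, finrank_top', hfin])
      refine ⟨by rw [← h1, h], ?_⟩
      refine ⟨(IntermediateField.adjoin.powerBasis hix).map
        ((IntermediateField.equivOfEq htop).trans IntermediateField.topEquiv), ?_, ?_⟩
      · rw [PowerBasis.map_gen]
        rfl
      · rw [PowerBasis.map_dim]
        show (minpoly k x).natDegree = p
        rw [← h1, h]
  -- claim A
  have hA : ∀ η : K, η ^ p = 1 → ∃ y : k, algebraMap k K y = η := by
    intro η hηp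
    by_contra hno
    push_neg at hno
    have hη1 : η ≠ 1 := by
      intro h1; exact hno 1 (by simp [h1])
    obtain ⟨hdeg, -⟩ := key η hno
    have hgs : (aeval η) (∑ i ∈ Finset.range p, (X : k[X]) ^ i) = 0 := by
      have := geom_sum_mul η p
      rw [hηp, sub_self] at this
      have hne : η - 1 ≠ 0 := sub_ne_zero.mpr hη1
      have : (∑ i ∈ Finset.range p, η ^ i) = 0 := by
        rcases mul_eq_zero.mp this with h | h
        · exact h
        · exact absurd h hne
      simpa using this
    have hdvd2 : minpoly k η ∣ ∑ i ∈ Finset.range p, (X : k[X]) ^ i :=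
      minpoly.dvd k η hgs
    have hg0 : (∑ i ∈ Finset.range p, (X : k[X]) ^ i) ≠ 0 := by
      intro h0
      have : ((∑ i ∈ Finset.range p, (X : k[X]) ^ i)).coeff 0 = 1 := by
        rw [finset_sum_coeff]
        rw [Finset.sum_eq_single 0]
        · simp
        · intro b _ hb; rw [coeff_X_pow]; simp [Ne.symm hb]
        · intro hb; exact absurd (Finset.mem_range.mpr hp.pos) hb
      rw [h0] at this
      simp at this
    have hle : (minpoly k η).natDegree ≤ p - 1 := by
      refine le_trans (Polynomial.natDegree_le_of_dvd hdvd2 hg0) ?_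
      refine Polynomial.natDegree_sum_le_of_forall_le _ _ ?_
      intro i hi
      simpa using Nat.le_sub_one_of_lt (Finset.mem_range.mp hi)
    rw [hdeg] at hle
    omega
  haveI : NeZero p := ⟨hpne⟩
  -- mu preservation
  have hmu : ∀ m : ℕ, ∀ ζ : K, ζ ^ p ^ m = 1 → ∃ ζ₀ : k, ζ = algebraMap k K ζ₀ := by
    intro m
    induction m with
    | zero => intro ζ hζ; exact ⟨1, by simpa using hζ⟩
    | succ m IH =>
      intro ζ hζ
      by_cases hζk : ∃ y : k, ζ = algebraMap k K y
      · exact hζk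
      exfalso
      push_neg at hζk
      have hno : ∀ y : k, algebraMap k K y ≠ ζ := fun y hy => hζk y hy.symm
      have hζ0 : ζ ≠ 0 := by
        intro h0; rw [h0, zero_pow (pow_ne_zero _ hpne)] at hζ; exact zero_ne_one hζ
      have hζp : (ζ ^ p) ^ p ^ m = 1 := by
        rw [← pow_mul, ← pow_succ']; exact hζ
      obtain ⟨c, hc⟩ := IH (ζ ^ p) hζp
      have hcm : c ^ p ^ m = 1 := hinj (by rw [map_pow, ← hc, hζp, map_one])
      have hc0 : c ≠ 0 := by
        rintro rfl; rw [zero_pow (pow_ne_zero _ hpne)] at hcm; exact zero_ne_one hcm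
      by_cases hη1 : ζ ^ p ^ m = 1
      · obtain ⟨y, hy⟩ := IH ζ hη1; exact hno y hy.symm
      have hηp : (ζ ^ p ^ m) ^ p = 1 := by rw [← pow_mul, ← pow_succ]; exact hζ
      obtain ⟨ω, hω⟩ := hA _ hηp
      have hω1 : ω ≠ 1 := by rintro rfl; rw [map_one] at hω; exact hη1 hω.symm
      have hωp : ω ^ p = 1 := hinj (by rw [map_pow, hω, hηp, map_one])
      have hord : orderOf ω = p := by
        have h1 : orderOf ω ∣ p := orderOf_dvd_of_pow_eq_one hωp
        rcases hp.eq_one_or_self_of_dvd _ h1 with h | h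
        · exact absurd (orderOf_eq_one_iff.mp h) hω1
        · exact h
      have hprim : IsPrimitiveRoot ω p := hord ▸ IsPrimitiveRoot.orderOf ω
      -- minpoly of ζ
      obtain ⟨hdegζ, pbZ, hgenZ, hdimZ⟩ := key ζ hno
      have hirrc : Irreducible (X ^ p - C c) := by
        apply X_pow_sub_C_irreducible_of_prime hp
        intro b hb
        have hb0 : b ≠ 0 := by rintro rfl; rw [zero_pow hpne] at hb; exact hc0 hb.symm
        have hB : algebraMap k K b ≠ 0 := fun h => hb0 (hinj (by rw [h, map_zero]))
        have hfrac : (ζ * (algebraMap k K b)⁻¹) ^ p = 1 := by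
          rw [mul_pow, inv_pow, ← map_pow, hb, ← hc, mul_inv_cancel₀ (pow_ne_zero _ hζ0)]
        obtain ⟨y, hy⟩ := hA _ hfrac
        apply hno (y * b)
        rw [map_mul, hy]
        field_simp
      have hmpζ : minpoly k ζ = X ^ p - C c :=
        (minpoly.eq_of_irreducible_of_monic hirrc (by simp [hc]) (monic_X_pow_sub_C c hpne)).symm
      -- t is not in the base field
      have hnt : ∀ y : k, algebraMap k K y ≠ t := by
        intro y hy
        apply hgood
        refine ⟨1, y, ⟨0, by simp⟩, ?_⟩
        have h2 : algebraMap k K (y ^ p) = algebraMap k K u := by rw [map_pow, hy, ht]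
        rw [one_mul]; exact (hinj h2).symm
      obtain ⟨-, pbT, hgenT, hdimT⟩ := key t hnt
      -- the automorphism sigma
      have hroot : (aeval (algebraMap k K ω * ζ)) (minpoly k pbZ.gen) = 0 := by
        rw [hgenZ, hmpζ, map_sub, aeval_C, map_pow, aeval_X, mul_pow, ← map_pow, hωp,
          map_one, one_mul, hc, sub_self]
      set σ : K →ₐ[k] K := pbZ.lift (algebraMap k K ω * ζ) hroot with hσdef
      have hσζ : σ ζ = algebraMap k K ω * ζ := by
        have h2 := pbZ.lift_gen (algebraMap k K ω * ζ) hroot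
        rw [hgenZ] at h2
        exact h2
      have hσtp : (σ t) ^ p = t ^ p := by rw [← map_pow, ht, AlgHom.commutes, ← ht]
      have hfrt : (σ t * t⁻¹) ^ p = 1 := by
        rw [mul_pow, hσtp, inv_pow, mul_inv_cancel₀ (pow_ne_zero _ ht0)]
      obtain ⟨e, he⟩ := hA _ hfrt
      have hσt : σ t = algebraMap k K e * t := by rw [he]; field_simp
      have hep : e ^ p = 1 := hinj (by rw [map_pow, he, hfrt, map_one])
      obtain ⟨j, hjp, hje⟩ := hprim.eq_pow_of_pow_eq_one hep
      have hζω : algebraMap k K ω * ζ ≠ ζ := by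
        intro hq
        apply hω1
        apply hinj
        rw [map_one]
        have := mul_right_cancel₀ hζ0 (hq.trans (one_mul ζ).symm)
        exact this
      have hj0 : j ≠ 0 := by
        rintro rfl
        have het : σ t = t := by rw [hσt, ← hje, pow_zero, map_one, one_mul]
        have hid : σ = AlgHom.id k K := pbT.algHom_ext (by rw [hgenT, het]; rfl)
        apply hζω
        rw [← hσζ, hid]; rfl
      -- the fixed element
      have hσy : σ (t * ζ ^ (p - j)) = t * ζ ^ (p - j) := by
        have hωω : algebraMap k K (ω ^ j) * algebraMap k K (ω ^ (p - j)) = 1 := by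
          rw [← map_mul, ← pow_add, Nat.add_sub_cancel' hjp.le, hωp, map_one]
        calc σ (t * ζ ^ (p - j))
            = (algebraMap k K (ω ^ j) * algebraMap k K (ω ^ (p - j))) * (t * ζ ^ (p - j)) := by
              rw [map_mul, map_pow, hσt, hσζ, ← hje, mul_pow, ← map_pow, map_pow]; ring
          _ = t * ζ ^ (p - j) := by rw [hωω, one_mul]
      -- coordinates with respect to the power basis of t
      set y : K := t * ζ ^ (p - j) with hydef
      set av : Fin pbT.dim → k := fun i => pbT.basis.repr y i with havdef
      have hrep : ∑ i, av i • pbT.gen ^ (i : ℕ) = y := by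
        have h3 := pbT.basis.sum_repr y
        simp_rw [pbT.basis_eq_pow] at h3
        exact h3
      have hσrep : ∑ i, (av i * ω ^ (j * (i : ℕ))) • pbT.gen ^ (i : ℕ) = y := by
        have h4 := congrArg σ hrep
        rw [hσy, map_sum] at h4
        rw [← h4]
        apply Finset.sum_congr rfl
        intro i _
        rw [map_smul, map_pow, hgenT, hσt, ← hje, mul_pow, ← map_pow, ← pow_mul,
          Algebra.smul_def, Algebra.smul_def, map_mul]
        ring
      have hcoef : ∀ i : Fin pbT.dim, av i * ω ^ (j * (i : ℕ)) - av i = 0 := by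
        have h5 : ∑ i, (fun i : Fin pbT.dim => av i * ω ^ (j * (i : ℕ)) - av i) i • pbT.basis i
            = 0 := by
          simp_rw [pbT.basis_eq_pow, sub_smul]
          rw [Finset.sum_sub_distrib, hσrep, hrep, sub_self]
        exact Fintype.linearIndependent_iff.mp pbT.basis.linearIndependent _ h5
      have hzero : ∀ i : Fin pbT.dim, (i : ℕ) ≠ 0 → av i = 0 := by
        intro i hi
        have hωji : ω ^ (j * (i : ℕ)) ≠ 1 := by
          intro hone
          rw [hprim.pow_eq_one_iff_dvd] at hone
          rcases (Nat.Prime.dvd_mul hp).mp hone with h | h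
          · have := Nat.le_of_dvd (Nat.pos_of_ne_zero hj0) h; omega
          · have hilt : (i : ℕ) < p := by rw [← hdimT]; exact i.isLt
            have := Nat.le_of_dvd (Nat.pos_of_ne_zero hi) h; omega
        have h6 := hcoef i
        have h7 : av i * (ω ^ (j * (i : ℕ)) - 1) = 0 := by rw [mul_sub, mul_one]; exact h6
        rcases mul_eq_zero.mp h7 with h | h
        · exact h
        · exact absurd (sub_eq_zero.mp h) hωji
      -- conclude y is in the base field
      have hdimpos : 0 < pbT.dim := by rw [hdimT]; exact hp.pos
      set i0 : Fin pbT.dim := ⟨0, hdimpos⟩ with hi0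
      have hyval : y = algebraMap k K (av i0) := by
        rw [← hrep, Finset.sum_eq_single i0]
        · simp [Algebra.smul_def, hi0]
        · intro b _ hb
          have : (b : ℕ) ≠ 0 := by
            intro h; apply hb; apply Fin.ext; simp [h, hi0]
          rw [hzero b this, zero_smul]
        · intro h; exact absurd (Finset.mem_univ i0) h
      -- derive the contradiction with hgood
      have hfinal : algebraMap k K (u * c ^ (p - j)) = algebraMap k K (av i0 ^ p) := by
        rw [map_mul, map_pow, map_pow, ← hc, ← ht]
        calc t ^ p * (ζ ^ p) ^ (p - j) = (t * ζ ^ (p - j)) ^ p := by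
              rw [mul_pow, ← pow_mul, ← pow_mul, Nat.mul_comm p (p - j)]
          _ = algebraMap k K (av i0) ^ p := by rw [← hyval]
      have hucj : u * c ^ (p - j) = av i0 ^ p := hinj hfinal
      apply hgood
      refine ⟨(c ^ (p - j))⁻¹, av i0, ⟨m, ?_⟩, ?_⟩
      · rw [inv_pow, ← pow_mul, Nat.mul_comm, pow_mul, hcm, one_pow, inv_one]
      · have hcj0 : c ^ (p - j) ≠ 0 := pow_ne_zero _ hc0
        field_simp
        linear_combination hucj
  refine ⟨hfin, fun ζ hζ => hζ.elim (fun m hm => hmu m ζ hm), ?_⟩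
  -- t itself satisfies the hypothesis over K
  rintro ⟨ζ, a, ⟨m, hm⟩, hta⟩
  obtain ⟨ζ₀, hζ₀⟩ := hmu m ζ hm
  have hζ₀m : ζ₀ ^ p ^ m = 1 := hinj (by rw [map_pow, ← hζ₀, hm, map_one])
  have hζ₀0 : ζ₀ ≠ 0 := by
    rintro rfl; rw [zero_pow (pow_ne_zero _ hpne)] at hζ₀m; exact zero_ne_one hζ₀m
  have ha0 : a ≠ 0 := by
    rintro rfl; rw [zero_pow hpne, mul_zero] at hta; exact ht0 hta
  have hNa : Algebra.norm k a ≠ 0 := Algebra.norm_ne_zero_iff.mpr ha0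
  set b := Algebra.norm k a with hbdef
  have heq : algebraMap k K u = algebraMap k K (ζ₀ ^ p) * (a ^ p) ^ p := by
    rw [← ht, hta, mul_pow, hζ₀, ← map_pow]
  have hnorm : u ^ p = (ζ₀ ^ p) ^ p * (b ^ p) ^ p := by
    have h8 := congrArg (Algebra.norm k) heq
    rw [map_mul, Algebra.norm_algebraMap, Algebra.norm_algebraMap, map_pow, map_pow, hfin] at h8
    exact h8
  have hzb0 : ζ₀ ^ p * b ^ p ≠ 0 := mul_ne_zero (pow_ne_zero _ hζ₀0) (pow_ne_zero _ hNa)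
  have hw : (u / (ζ₀ ^ p * b ^ p)) ^ p = 1 := by
    rw [div_pow, hnorm, mul_pow, div_self (mul_ne_zero (pow_ne_zero _ (pow_ne_zero _ hζ₀0))
      (pow_ne_zero _ (pow_ne_zero _ hNa)))]
  apply hgood
  refine ⟨u / (ζ₀ ^ p * b ^ p) * ζ₀ ^ p, b, ⟨m + 1, ?_⟩, ?_⟩
  · rw [mul_pow]
    have h9 : (u / (ζ₀ ^ p * b ^ p)) ^ p ^ (m + 1) = 1 := by
      rw [pow_succ', pow_mul, hw, one_pow]
    have h10 : (ζ₀ ^ p) ^ p ^ (m + 1) = 1 := by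
      rw [← pow_mul, Nat.mul_comm, pow_mul, pow_succ, pow_mul, hζ₀m, one_pow, one_pow]
    rw [h9, h10, one_mul]
  · field_simp

universe v

lemma mainV {K : Type v} [Field K] {p : ℕ} (hp : p.Prime) :
    ∀ (d : ℕ), 1 ≤ d → ∀ (k : Type v) [Field k] [Algebra k K] (u : k), u ≠ 0 →
      (¬ ∃ ζ a : k, (∃ m : ℕ, ζ ^ p ^ m = 1) ∧ u = ζ * a ^ p) →
      ∀ t : K, t ^ p ^ d = algebraMap k K u →
      IntermediateField.adjoin k {t} = ⊤ →
      Module.finrank k K = p ^ d ∧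
      (∀ ζ : K, (∃ m : ℕ, ζ ^ p ^ m = 1) → ∃ ζ₀ : k, ζ = algebraMap k K ζ₀) ∧
      ¬ ∃ ζ a : K, (∃ m : ℕ, ζ ^ p ^ m = 1) ∧ t = ζ * a ^ p := by
  intro d
  induction d with
  | zero => omega
  | succ e IH =>
    intro _ k _ _ u hu hgood t ht hK
    rcases Nat.eq_zero_or_pos e with rfl | he
    · have ht1 : t ^ p = algebraMap k K u := by rw [← pow_one p, ← ht]
      obtain ⟨h1, h2, h3⟩ := step hp hu hgood ht1 hK
      exact ⟨by rw [h1, pow_one], h2, h3⟩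
    · set s : K := t ^ p ^ e with hsdef
      have hs : s ^ p = algebraMap k K u := by
        rw [hsdef, ← pow_mul, ← pow_succ]; exact ht
      set F : IntermediateField k K := IntermediateField.adjoin k {s} with hF
      set sF : F := IntermediateField.AdjoinSimple.gen k s with hsF
      have hsFcoe : algebraMap (↥F) K sF = s := IntermediateField.AdjoinSimple.algebraMap_gen k s
      have hinjF : Function.Injective (algebraMap (↥F) K) := (algebraMap (↥F) K).injective
      have hsFp : sF ^ p = algebraMap k (↥F) u := by
        apply hinjF
        rw [map_pow, hsFcoe, ← IsScalarTower.algebraMap_apply, hs]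
      have hsF0 : sF ≠ 0 := by
        intro h0
        apply hu
        apply (algebraMap k (↥F)).injective
        rw [← hsFp, h0, zero_pow hp.ne_zero, map_zero]
      have hadj : IntermediateField.adjoin k {sF} = ⊤ := adjoin_gen_top' s
      obtain ⟨hfin1, hmu1, hgood1⟩ := step hp hu hgood hsFp hadj
      have htF : t ^ p ^ e = algebraMap (↥F) K sF := by rw [hsFcoe]
      have hKF : IntermediateField.adjoin (↥F) {t} = ⊤ :=
        IntermediateField.adjoin_eq_top_of_adjoin_eq_top k hK
      obtain ⟨hfin2, hmu2, hgood2⟩ := IH he (↥F) sF hsF0 hgood1 t htF hKF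
      refine ⟨?_, ?_, hgood2⟩
      · rw [← Module.finrank_mul_finrank k (↥F) K, hfin1, hfin2, ← pow_succ']
      · intro ζ hζ
        obtain ⟨m, hm⟩ := hζ
        obtain ⟨ζ₁, hζ₁⟩ := hmu2 ζ ⟨m, hm⟩
        have hζ₁m : ζ₁ ^ p ^ m = 1 := by
          apply hinjF
          rw [map_pow, ← hζ₁, hm, map_one]
        obtain ⟨ζ₀, hζ₀⟩ := hmu1 ζ₁ ⟨m, hζ₁m⟩
        exact ⟨ζ₀, by rw [hζ₁, hζ₀, ← IsScalarTower.algebraMap_apply]⟩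

theorem stmt3 {k K : Type*} [Field k] [Field K] [Algebra k K] (p : ℕ) (hp : p.Prime)
    (hchar : (p : k) ≠ 0) (u : k) (hu : u ≠ 0)
    (h : ¬ ∃ ζ a : k, (∃ m : ℕ, ζ ^ p ^ m = 1) ∧ u = ζ * a ^ p)
    (d : ℕ) (hd : 1 ≤ d) (t : K) (ht : t ^ p ^ d = algebraMap k K u)
    (hK : IntermediateField.adjoin k {t} = ⊤) :
    Module.finrank k K = p ^ d ∧
      ∀ ζ : K, (∃ m : ℕ, ζ ^ p ^ m = 1) ↔
        ∃ ζ₀ : k, (∃ m : ℕ, ζ₀ ^ p ^ m = 1) ∧ ζ = algebraMap k K ζ₀ := by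
  have hinj0 : Function.Injective (algebraMap k (↥(⊥ : IntermediateField k K))) := (algebraMap k (↥(⊥ : IntermediateField k K))).injective
  have hinjK : Function.Injective (algebraMap k K) := (algebraMap k K).injective
  have hsurj : ∀ x : ↥(⊥ : IntermediateField k K), ∃ y : k, algebraMap k (↥(⊥ : IntermediateField k K)) y = x := by
    intro x
    have hx := x.2
    rw [IntermediateField.mem_bot] at hx
    obtain ⟨y, hy⟩ := hx
    refine ⟨y, ?_⟩
    apply (algebraMap (↥(⊥ : IntermediateField k K)) K).injective
    rw [← IsScalarTower.algebraMap_apply]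
    exact hy
  have hu0ne : (algebraMap k (↥(⊥ : IntermediateField k K)) u) ≠ 0 := fun h0 => hu (hinj0 (by rw [h0, map_zero]))
  have hgood0 : ¬ ∃ ζ a : ↥(⊥ : IntermediateField k K), (∃ m : ℕ, ζ ^ p ^ m = 1) ∧ (algebraMap k (↥(⊥ : IntermediateField k K)) u) = ζ * a ^ p := by
    rintro ⟨ζ, a, ⟨m, hm⟩, hζa⟩
    obtain ⟨ζ', hζ'⟩ := hsurj ζ
    obtain ⟨a', ha'⟩ := hsurj a
    apply h
    refine ⟨ζ', a', ⟨m, ?_⟩, ?_⟩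
    · apply hinj0; rw [map_pow, hζ', hm, map_one]
    · apply hinj0; rw [hζa, map_mul, map_pow, hζ', ha']
  have ht0 : t ^ p ^ d = algebraMap (↥(⊥ : IntermediateField k K)) K (algebraMap k (↥(⊥ : IntermediateField k K)) u) := by
    rw [← IsScalarTower.algebraMap_apply]; exact ht
  have hK0 : IntermediateField.adjoin (↥(⊥ : IntermediateField k K)) {t} = ⊤ :=
    IntermediateField.adjoin_eq_top_of_adjoin_eq_top k hK
  obtain ⟨hfin, hmu, -⟩ := mainV hp d hd (↥(⊥ : IntermediateField k K)) (algebraMap k (↥(⊥ : IntermediateField k K)) u) hu0ne hgood0 t ht0 hK0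
  constructor
  · rw [← Module.finrank_mul_finrank k (↥(⊥ : IntermediateField k K)) K, hfin, IntermediateField.finrank_bot, one_mul]
  · intro ζ
    constructor
    · rintro ⟨m, hm⟩
      obtain ⟨ζ₁, hζ₁⟩ := hmu ζ ⟨m, hm⟩
      obtain ⟨ζ₀, hζ₀⟩ := hsurj ζ₁
      have hζeq : ζ = algebraMap k K ζ₀ := by
        rw [hζ₁, ← hζ₀, ← IsScalarTower.algebraMap_apply]
      refine ⟨ζ₀, ⟨m, ?_⟩, hζeq⟩
      apply hinjK
      rw [map_pow, ← hζeq, hm, map_one]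
    · rintro ⟨ζ₀, ⟨m, hm⟩, rfl⟩
      exact ⟨m, by rw [← map_pow, hm, map_one]⟩
end

section
/- Let G and H be finite groups and ψ : G → H × A an injective group homomorphism with A abelian, such that the composite G → H (projection on the first factor) is surjective. Then ψ restricts to an isomorphism from the commutator subgroup [G,G] onto [H,H] × {1}; in particular |[G,G]| = |[H,H]|. -/
theorem stmt7 {G H A : Type*} [Group G] [Finite G] [Group H] [Finite H] [CommGroup A]
    (ψ : G →* H × A) (hinj : Function.Injective ψ)
    (hsurj : Function.Surjective ((MonoidHom.fst H A).comp ψ)) :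
    (commutator G).map ψ = (commutator H).prod (⊥ : Subgroup A) ∧
      Nat.card (commutator G) = Nat.card (commutator H) := by
  have hfst : (commutator G).map ((MonoidHom.fst H A).comp ψ) = commutator H := by
    rw [commutator_def, commutator_def, Subgroup.map_commutator,
      Subgroup.map_top_of_surjective _ hsurj]
  have hsnd : ∀ x ∈ (commutator G).map ψ, x.2 = 1 := by
    rintro x ⟨g, hg, rfl⟩
    have : g ∈ ((MonoidHom.snd H A).comp ψ).ker := by
      have : commutator G ≤ ((MonoidHom.snd H A).comp ψ).ker :=
        Abelianization.commutator_subset_ker _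
      exact this hg
    simpa using this
  have hmain : (commutator G).map ψ = (commutator H).prod (⊥ : Subgroup A) := by
    ext ⟨h, a⟩
    simp only [Subgroup.mem_prod, Subgroup.mem_bot]
    constructor
    · intro hx
      refine ⟨?_, hsnd _ hx⟩
      rw [← hfst]
      rcases hx with ⟨g, hg, hgx⟩
      exact ⟨g, hg, by simp [hgx]⟩
    · rintro ⟨hh, rfl⟩
      rw [← hfst] at hh
      rcases hh with ⟨g, hg, hgx⟩
      have h2 : (ψ g).2 = 1 := hsnd _ ⟨g, hg, rfl⟩
      exact ⟨g, hg, by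
        have : (ψ g).1 = h := hgx
        exact Prod.ext this h2⟩
  refine ⟨hmain, ?_⟩
  have h1 : Nat.card (commutator G) = Nat.card ((commutator G).map ψ) :=
    Nat.card_congr (Subgroup.equivMapOfInjective _ _ hinj).toEquiv
  rw [h1, hmain]
  have h2 : Nat.card ((commutator H).prod (⊥ : Subgroup A)) =
      Nat.card (commutator H) * Nat.card (⊥ : Subgroup A) := by
    rw [Nat.card_congr (Subgroup.prodEquiv _ _).toEquiv, Nat.card_prod]
  simp [h2]
end

section
/- Let p be an odd prime and u ∈ ℤ_p^× a unit of infinite order. Define the p-level ℓ = ℓ_p(u) ≥ 1 to be the integer such that the closure of the cyclic group ⟨u⟩ in ℤ_p^× decomposes as C′ × (1 + p^ℓ ℤ_p) for some subgroup C′ of the torsion subgroup. If d ≥ 1 is an integer not divisible by p, c ∈ ℤ_p^×, s = ℓ_p(u), and n_s ∈ ℤ satisfies u^{n_s} ≡ c (mod p^s), then for every t ≥ s there exists n_t ∈ ℤ with n_t ≡ n_s (mod d) and u^{n_t} ≡ c (mod p^t). -/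
open Finset

private def congS (p : ℕ) [Fact p.Prime] (q : PadicInt p) : Subgroup (PadicInt p)ˣ where
  carrier := {x | q ∣ (x : PadicInt p) - 1}
  one_mem' := by simp
  mul_mem' := by
    intro a b ha hb
    have h : ((a * b : (PadicInt p)ˣ) : PadicInt p) - 1
        = (a : PadicInt p) * ((b : PadicInt p) - 1) + ((a : PadicInt p) - 1) := by
      push_cast; ring
    simp only [Set.mem_setOf_eq] at *
    rw [h]
    exact dvd_add (hb.mul_left _) ha
  inv_mem' := by
    intro a ha
    simp only [Set.mem_setOf_eq] at *
    have hinv : ((a⁻¹ : (PadicInt p)ˣ) : PadicInt p) * (a : PadicInt p) = 1 := by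
      rw [← Units.val_mul, inv_mul_cancel, Units.val_one]
    have h : ((a⁻¹ : (PadicInt p)ˣ) : PadicInt p) - 1
        = -((a⁻¹ : (PadicInt p)ˣ) : PadicInt p) * ((a : PadicInt p) - 1) := by
      linear_combination hinv
    rw [h]
    exact (ha.mul_left _)

private lemma powp_step (p : ℕ) [Fact p.Prime] (s : ℕ) (hs : 1 ≤ s) (x : PadicInt p)
    (hx : (p : PadicInt p) ^ s ∣ x - 1) : (p : PadicInt p) ^ (s + 1) ∣ x ^ p - 1 := by
  have hsum : (p : PadicInt p) ∣ ∑ i ∈ range p, x ^ i := by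
    have h1 : ∑ i ∈ range p, x ^ i = (∑ i ∈ range p, (x ^ i - 1)) + p := by
      rw [Finset.sum_sub_distrib]
      simp [mul_comm]
    rw [h1]
    refine dvd_add (Finset.dvd_sum fun i _ => ?_) dvd_rfl
    have h2 : x - 1 ∣ x ^ i - 1 := by
      simpa using sub_dvd_pow_sub_pow x 1 i
    have h3 : (p : PadicInt p) ∣ x - 1 := (dvd_pow_self (p : PadicInt p) (by omega)).trans hx
    exact h3.trans h2
  have hgeom : x ^ p - 1 = (∑ i ∈ range p, x ^ i) * (x - 1) := (geom_sum_mul x p).symm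
  rw [hgeom, pow_succ, mul_comm ((p:PadicInt p)^s)]
  exact mul_dvd_mul hsum hx

private lemma powpk (p : ℕ) [Fact p.Prime] (s : ℕ) (hs : 1 ≤ s) (x : PadicInt p)
    (hx : (p : PadicInt p) ^ s ∣ x - 1) (k : ℕ) :
    (p : PadicInt p) ^ (s + k) ∣ x ^ (p ^ k) - 1 := by
  induction k with
  | zero => simpa using hx
  | succ k ih =>
      have := powp_step p (s + k) (by omega) (x ^ (p ^ k)) ih
      rwa [← pow_mul, ← pow_succ] at this

theorem stmt9 (p : ℕ) [Fact p.Prime] (hodd : Odd p)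
    (u : (PadicInt p)ˣ) (hu : ¬ IsOfFinOrder u)
    (s : ℕ) (hs : 1 ≤ s) (C' : Subgroup (PadicInt p)ˣ)
    (hC' : ∀ c ∈ C', IsOfFinOrder c)
    (hlevel : closure {x : PadicInt p | ∃ n : ℤ, x = ((u ^ n : (PadicInt p)ˣ) : PadicInt p)} =
      {x : PadicInt p | ∃ c w : (PadicInt p)ˣ, c ∈ C' ∧
        ((w : PadicInt p) - 1 ∈ Ideal.span {(p : PadicInt p) ^ s}) ∧
        x = ((c * w : (PadicInt p)ˣ) : PadicInt p)})
    (d : ℕ) (hd : 1 ≤ d) (hpd : ¬ (p ∣ d))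
    (c : (PadicInt p)ˣ) (ns : ℤ)
    (hns : ((u ^ ns : (PadicInt p)ˣ) : PadicInt p) - (c : PadicInt p) ∈
      Ideal.span {(p : PadicInt p) ^ s}) :
    ∀ t ≥ s, ∃ nt : ℤ, nt ≡ ns [ZMOD (d : ℤ)] ∧
      ((u ^ nt : (PadicInt p)ˣ) : PadicInt p) - (c : PadicInt p) ∈
        Ideal.span {(p : PadicInt p) ^ t} := by
  intro t hts
  set k := t - s with hk
  have htk : t = s + k := by omega
  -- the unit w = c * (u^ns)⁻¹
  set w : (PadicInt p)ˣ := c * (u ^ ns)⁻¹ with hw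
  have hwinv : ((w : PadicInt p)) * (((w⁻¹ : (PadicInt p)ˣ)) : PadicInt p) = 1 := by
    rw [← Units.val_mul, mul_inv_cancel, Units.val_one]
  have huw : ((u ^ ns : (PadicInt p)ˣ) : PadicInt p) * (((u ^ ns : (PadicInt p)ˣ))⁻¹ : (PadicInt p)ˣ) = 1 := by
    rw [← Units.val_mul, mul_inv_cancel, Units.val_one]
  have hns' : (p : PadicInt p) ^ s ∣ ((u ^ ns : (PadicInt p)ˣ) : PadicInt p) - (c : PadicInt p) := by
    rwa [← Ideal.mem_span_singleton]
  -- w ≡ 1 mod p^s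
  have hw1 : (p : PadicInt p) ^ s ∣ (w : PadicInt p) - 1 := by
    have h : (w : PadicInt p) - 1
        = -((((u ^ ns : (PadicInt p)ˣ))⁻¹ : (PadicInt p)ˣ) : PadicInt p)
          * (((u ^ ns : (PadicInt p)ˣ) : PadicInt p) - (c : PadicInt p)) := by
      rw [hw]
      push_cast
      linear_combination huw
    rw [h]
    exact hns'.mul_left _
  -- w lies in the closure of the cyclic group
  have hwcl : (w : PadicInt p) ∈
      closure {x : PadicInt p | ∃ n : ℤ, x = ((u ^ n : (PadicInt p)ˣ) : PadicInt p)} := by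
    rw [hlevel]
    exact ⟨1, w, one_mem _, Ideal.mem_span_singleton.mpr hw1, by simp⟩
  -- approximate w by a power of u mod p^t
  obtain ⟨b, ⟨n0, rfl⟩, hb⟩ := Metric.mem_closure_iff.mp hwcl ((p : ℝ) ^ (-(t:ℤ)))
    (zpow_pos (by exact_mod_cast (Fact.out : p.Prime).pos) _)
  have happrox : (p : PadicInt p) ^ t ∣ ((u ^ n0 : (PadicInt p)ˣ) : PadicInt p) - (w : PadicInt p) := by
    rw [← Ideal.mem_span_singleton, ← PadicInt.norm_le_pow_iff_mem_span_pow]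
    rw [dist_eq_norm, norm_sub_rev] at hb
    exact hb.le
  -- u^n0 ≡ 1 mod p^s
  have hts' : (p : PadicInt p) ^ s ∣ (p : PadicInt p) ^ t := pow_dvd_pow _ hts
  have hn0s : (p : PadicInt p) ^ s ∣ ((u ^ n0 : (PadicInt p)ˣ) : PadicInt p) - 1 := by
    have h : ((u ^ n0 : (PadicInt p)ˣ) : PadicInt p) - 1
        = (((u ^ n0 : (PadicInt p)ˣ) : PadicInt p) - (w : PadicInt p)) + ((w : PadicInt p) - 1) := by ring
    rw [h]
    exact dvd_add (hts'.trans happrox) hw1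
  -- coprimality: get e, m with d * e = 1 + p^k * m
  have hcop : IsCoprime (d : ℤ) ((p : ℤ) ^ k) := by
    have : Nat.Coprime d (p ^ k) :=
      (Nat.Coprime.pow_right k (((Fact.out : p.Prime).coprime_iff_not_dvd.mpr hpd).symm))
    exact_mod_cast this
  obtain ⟨e, f, hef⟩ := hcop
  set m : ℤ := -f with hm
  have hde : (d : ℤ) * e = 1 + (p : ℤ) ^ k * m := by rw [hm]; linarith [hef]
  refine ⟨ns + (d : ℤ) * (e * n0), ?_, ?_⟩
  · have : (d : ℤ) ∣ ns - (ns + (d : ℤ) * (e * n0)) := ⟨-(e * n0), by ring⟩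
    exact Int.modEq_iff_dvd.mpr this
  · -- express u^nt * c⁻¹ as (u^n0 * w⁻¹) * ((u^n0)^(p^k))^m
    set A : (PadicInt p)ˣ := u ^ n0 * w⁻¹ with hA
    set B : (PadicInt p)ˣ := (u ^ n0) ^ (p ^ k : ℕ) with hB
    have hX : u ^ (ns + (d : ℤ) * (e * n0)) * c⁻¹ = A * B ^ m := by
      rw [hA, hB, hw]
      have h1 : u ^ (ns + (d : ℤ) * (e * n0)) = u ^ ns * (u ^ n0) ^ ((d : ℤ) * e) := by
        rw [← zpow_mul, ← zpow_add]; ring_nf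
      rw [h1, hde, zpow_add, zpow_one, zpow_mul, ← zpow_natCast (u ^ n0) (p ^ k : ℕ)]
      push_cast
      rw [mul_inv_rev, inv_inv]
      simp only [mul_comm, mul_left_comm, mul_assoc]
    -- memberships in congS
    have hAmem : A ∈ congS p ((p : PadicInt p) ^ t) := by
      show (p : PadicInt p) ^ t ∣ (A : PadicInt p) - 1
      have h : (A : PadicInt p) - 1
          = (((u ^ n0 : (PadicInt p)ˣ) : PadicInt p) - (w : PadicInt p))
            * (((w⁻¹ : (PadicInt p)ˣ)) : PadicInt p) := by
        rw [hA]
        push_cast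
        linear_combination hwinv
      rw [h]
      exact happrox.mul_right _
    have hBmem : B ∈ congS p ((p : PadicInt p) ^ t) := by
      show (p : PadicInt p) ^ t ∣ (B : PadicInt p) - 1
      have := powpk p s hs ((u ^ n0 : (PadicInt p)ˣ) : PadicInt p) hn0s k
      rw [← htk] at this
      rw [hB]
      push_cast
      exact this
    have hXmem := mul_mem hAmem (zpow_mem hBmem m)
    rw [← hX] at hXmem
    have hXdvd : (p : PadicInt p) ^ t ∣
        ((u ^ (ns + (d : ℤ) * (e * n0)) * c⁻¹ : (PadicInt p)ˣ) : PadicInt p) - 1 := hXmem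
    rw [Ideal.mem_span_singleton]
    have hcc : ((c⁻¹ : (PadicInt p)ˣ) : PadicInt p) * (c : PadicInt p) = 1 := by
      rw [← Units.val_mul, inv_mul_cancel, Units.val_one]
    have h : ((u ^ (ns + (d : ℤ) * (e * n0)) : (PadicInt p)ˣ) : PadicInt p) - (c : PadicInt p)
        = (c : PadicInt p)
          * (((u ^ (ns + (d : ℤ) * (e * n0)) * c⁻¹ : (PadicInt p)ˣ) : PadicInt p) - 1) := by
      push_cast
      linear_combination (-((u ^ (ns + (d : ℤ) * (e * n0)) : (PadicInt p)ˣ) : PadicInt p)) * hcc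
    rw [h]
    exact hXdvd.mul_left _
end

section
/- Let p be an odd prime and u ∈ ℤ_p^× a unit not a root of unity. Then there exist a subgroup C′ of the group C of roots of unity in ℚ_p and an integer ℓ ≥ 1 such that the closure of the cyclic subgroup generated by u in ℤ_p^× equals C′ × (1 + p^ℓℤ_p). -/
open scoped Classical
variable {p : ℕ} [hp : Fact p.Prime]

lemma sum_norm_le {ι : Type*} (s : Finset ι) (f : ι → ℤ_[p]) {C : ℝ} (hC : 0 ≤ C)
    (h : ∀ i ∈ s, ‖f i‖ ≤ C) : ‖∑ i ∈ s, f i‖ ≤ C := by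
  induction s using Finset.cons_induction with
  | empty => simpa using hC
  | cons a s ha ih =>
    rw [Finset.sum_cons]
    refine (PadicInt.nonarchimedean _ _).trans (max_le (h a (Finset.mem_cons_self a s)) ?_)
    exact ih fun i hi => h i (Finset.mem_cons_of_mem hi)

lemma one_add_pow (x : ℤ_[p]) (m : ℕ) : ∃ c : ℤ_[p], (1+x)^m = 1 + m*x + x^2*c := by
  induction m with
  | zero => exact ⟨0, by ring⟩
  | succ m ih =>
    obtain ⟨c, hc⟩ := ih
    exact ⟨c + m + c*x, by rw [pow_succ, hc]; push_cast; ring⟩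

lemma ppow_mono {m n : ℤ} (h : m ≤ n) : (p:ℝ)^(-n) ≤ (p:ℝ)^(-m) := by
  have hp1 : (1:ℝ) < p := by exact_mod_cast hp.out.one_lt
  exact zpow_le_zpow_right₀ hp1.le (neg_le_neg h)

lemma ppow_pos (n : ℤ) : (0:ℝ) < (p:ℝ)^n := by
  have hp0 : (0:ℝ) < p := by exact_mod_cast hp.out.pos
  exact zpow_pos hp0 n



lemma key_pow_p (hodd : Odd p) (x : ℤ_[p]) {a : ℕ} (ha : 1 ≤ a)
    (hx : (p:ℤ_[p])^a ∣ x) : (p:ℤ_[p])^(2*a+1) ∣ ((1+x)^p - 1 - p*x) := by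
  have hp3 : 3 ≤ p := by
    obtain ⟨k, hk⟩ := hodd
    have := hp.out.two_le
    omega
  have expand : (1+x)^p - 1 - p*x
      = ∑ i ∈ Finset.range (p-1), x^(i+2) * (p.choose (i+2) : ℤ_[p]) := by
    have h1 : (1+x)^p = ∑ k ∈ Finset.range (p+1), x^k * (p.choose k : ℤ_[p]) := by
      rw [add_comm 1 x]
      simpa [one_pow] using add_pow x 1 p
    have h2 : Finset.range p = Finset.range ((p-1)+1) := by congr 1 <;> omega
    rw [h1, Finset.sum_range_succ', h2, Finset.sum_range_succ']
    simp [Nat.choose_one_right]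
    ring
  rw [expand]
  apply Finset.dvd_sum
  intro i hi
  rw [Finset.mem_range] at hi
  obtain ⟨y, hy⟩ := hx
  rcases eq_or_lt_of_le (show i + 2 ≤ p by omega) with h | h
  · rw [h, Nat.choose_self, Nat.cast_one, mul_one, hy, mul_pow, ← pow_mul]
    have hle : 2*a+1 ≤ a*p := by nlinarith
    exact Dvd.dvd.mul_right (pow_dvd_pow _ hle) _
  · have hdvd : (p:ℤ_[p]) ∣ (p.choose (i+2) : ℤ_[p]) :=
      Nat.cast_dvd_cast (hp.out.dvd_choose_self (by omega) h)
    obtain ⟨t, ht⟩ := hdvd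
    refine ⟨y^2 * x^i * t, ?_⟩
    calc x^(i+2) * (p.choose (i+2) : ℤ_[p]) = x^2 * x^i * ((p:ℤ_[p])*t) := by rw [← ht]; ring
      _ = ((p:ℤ_[p])^a*y)^2 * x^i * ((p:ℤ_[p])*t) := by rw [← hy]
      _ = (p:ℤ_[p])^(2*a+1) * (y^2 * x^i * t) := by ring

lemma ppow_strict {m n : ℤ} (h : m < n) : (p:ℝ)^(-n) < (p:ℝ)^(-m) := by
  have hp1 : (1:ℝ) < p := by exact_mod_cast hp.out.one_lt
  exact zpow_lt_zpow_right₀ hp1 (by omega)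

lemma dvd_iff_norm_le {x : ℤ_[p]} {n : ℕ} : (p:ℤ_[p])^n ∣ x ↔ ‖x‖ ≤ (p:ℝ)^(-(n:ℤ)) := by
  rw [PadicInt.norm_le_pow_iff_mem_span_pow, Ideal.mem_span_singleton]

lemma norm_pow_p_sub_one (hodd : Odd p) (v : ℤ_[p]ˣ) {a : ℕ} (ha : 1 ≤ a)
    (hv : ‖(v:ℤ_[p]) - 1‖ = (p:ℝ)^(-(a:ℤ))) :
    ‖((v^p : ℤ_[p]ˣ) : ℤ_[p]) - 1‖ = (p:ℝ)^(-((a:ℤ)+1)) := by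
  set x : ℤ_[p] := (v:ℤ_[p]) - 1 with hxdef
  have hvx : (v:ℤ_[p]) = 1 + x := by rw [hxdef]; ring
  have hxdvd : (p:ℤ_[p])^a ∣ x := dvd_iff_norm_le.mpr (le_of_eq hv)
  have hR : ‖(1+x)^p - 1 - p*x‖ ≤ (p:ℝ)^(-((2*a+1 : ℕ):ℤ)) :=
    dvd_iff_norm_le.mp (key_pow_p hodd x ha hxdvd)
  have hpx : ‖(p:ℤ_[p])*x‖ = (p:ℝ)^(-((a:ℤ)+1)) := by
    rw [norm_mul, PadicInt.norm_p, hv, ← zpow_neg_one, ← zpow_add₀]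
    · congr 1; ring
    · exact_mod_cast hp.out.pos.ne'
  have hcoe : ((v^p : ℤ_[p]ˣ) : ℤ_[p]) = (1+x)^p := by rw [Units.val_pow_eq_pow_val, hvx]
  have hsplit : ((v^p : ℤ_[p]ˣ) : ℤ_[p]) - 1 = (p:ℤ_[p])*x + ((1+x)^p - 1 - p*x) := by
    rw [hcoe]; ring
  rw [hsplit, PadicInt.norm_add_eq_max_of_ne, hpx, max_eq_left]
  · apply le_of_lt
    refine lt_of_le_of_lt hR ?_
    rw [hpx] at *
    refine ppow_strict ?_
    push_cast; omega
  · rw [hpx]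
    refine ne_of_gt (lt_of_le_of_lt hR ?_)
    refine ppow_strict ?_
    push_cast; omega

lemma norm_pow_ppow_sub_one (hodd : Odd p) (v : ℤ_[p]ˣ) {a : ℕ} (ha : 1 ≤ a)
    (hv : ‖(v:ℤ_[p]) - 1‖ = (p:ℝ)^(-(a:ℤ))) (k : ℕ) :
    ‖((v^(p^k) : ℤ_[p]ˣ) : ℤ_[p]) - 1‖ = (p:ℝ)^(-((a:ℤ)+k)) := by
  induction k with
  | zero => simpa using hv
  | succ k ih =>
    have h1 : v^(p^(k+1)) = (v^(p^k))^p := by rw [← pow_mul, pow_succ]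
    have := norm_pow_p_sub_one hodd (v^(p^k)) (a := a + k) (by omega) (by
      rw [ih]; congr 1 <;> omega)
    rw [h1, this]
    congr 1 <;> omega

lemma zpow_sub_one_norm_le (g : ℤ_[p]ˣ) {r : ℝ} (hg : ‖(g:ℤ_[p]) - 1‖ ≤ r) (m : ℤ) :
    ‖((g^m : ℤ_[p]ˣ) : ℤ_[p]) - 1‖ ≤ r := by
  have hnat : ∀ n : ℕ, ‖((g^n : ℤ_[p]ˣ) : ℤ_[p]) - 1‖ ≤ r := by
    intro n
    induction n with
    | zero => simpa using le_trans (norm_nonneg _) hg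
    | succ n ih =>
      have : ((g^(n+1) : ℤ_[p]ˣ) : ℤ_[p]) - 1
          = ((g^n : ℤ_[p]ˣ) : ℤ_[p]) * ((g:ℤ_[p]) - 1) + (((g^n : ℤ_[p]ˣ) : ℤ_[p]) - 1) := by
        rw [pow_succ, Units.val_mul]; ring
      rw [this]
      refine le_trans (PadicInt.nonarchimedean _ _) (max_le ?_ ih)
      rw [norm_mul, PadicInt.norm_units, one_mul]
      exact hg
  rcases le_or_gt 0 m with h | h
  · lift m to ℕ using h
    rw [zpow_natCast]; exact hnat m
  · have hm : ((g^m : ℤ_[p]ˣ) : ℤ_[p]) - 1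
        = -(((g^m : ℤ_[p]ˣ) : ℤ_[p]) * (((g^(-m) : ℤ_[p]ˣ) : ℤ_[p]) - 1)) := by
      have : (g^m * g^(-m) : ℤ_[p]ˣ) = 1 := by rw [← zpow_add]; simp
      have h2 : ((g^m : ℤ_[p]ˣ) : ℤ_[p]) * ((g^(-m) : ℤ_[p]ˣ) : ℤ_[p]) = 1 := by
        rw [← Units.val_mul, this, Units.val_one]
      rw [mul_sub, h2]; ring
    rw [hm, norm_neg, norm_mul, PadicInt.norm_units, one_mul]
    lift -m to ℕ using (by omega : (0:ℤ) ≤ -m) with n hn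
    rw [zpow_natCast]
    exact hnat n

lemma exists_unit_of_norm {x : ℤ_[p]} {n : ℕ} (h : ‖x‖ = (p:ℝ)^(-(n:ℤ))) :
    ∃ ε : ℤ_[p]ˣ, x = (ε:ℤ_[p]) * (p:ℤ_[p])^n := by
  have hx0 : x ≠ 0 := by
    intro h0
    rw [h0, norm_zero] at h
    exact absurd h.symm (ne_of_gt (ppow_pos _))
  have hval : x.valuation = (n:ℤ) := by
    have hnorm := PadicInt.norm_eq_zpow_neg_valuation hx0
    rw [h] at hnorm
    rcases lt_trichotomy (x.valuation:ℤ) (n:ℤ) with hlt | heq | hgt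
    · exact absurd hnorm (ne_of_lt (ppow_strict hlt))
    · exact heq
    · exact absurd hnorm (ne_of_gt (ppow_strict hgt))
  refine ⟨PadicInt.unitCoeff hx0, ?_⟩
  have := PadicInt.unitCoeff_spec hx0
  have hval' : x.valuation = n := by exact_mod_cast hval
  rwa [hval'] at this

lemma exists_nat_close (r : ℤ_[p]) : ∃ m : ℕ, ‖(m:ℤ_[p]) - r‖ ≤ (p:ℝ)^(-(1:ℕ):ℤ) := by
  refine ⟨(PadicInt.toZMod r).val, ?_⟩
  rw [← dvd_iff_norm_le, pow_one, ← Ideal.mem_span_singleton,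
    ← PadicInt.maximalIdeal_eq_span_p, ← PadicInt.ker_toZMod, RingHom.mem_ker, map_sub,
    map_natCast, ZMod.natCast_val, ZMod.cast_id, sub_self]

lemma dense_claim (hodd : Odd p) (v : ℤ_[p]ˣ) {ℓ : ℕ} (hℓ : 1 ≤ ℓ)
    (hv : ‖(v:ℤ_[p]) - 1‖ = (p:ℝ)^(-(ℓ:ℤ))) (k : ℕ) (t : ℤ_[p])
    (ht : ‖t - 1‖ ≤ (p:ℝ)^(-(ℓ:ℤ))) :
    ∃ n : ℕ, ‖((v^n : ℤ_[p]ˣ) : ℤ_[p]) - t‖ ≤ (p:ℝ)^(-((ℓ:ℤ)+k)) := by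
  induction k with
  | zero =>
    refine ⟨0, ?_⟩
    rw [pow_zero, Units.val_one, norm_sub_rev]
    simpa using ht
  | succ k ih =>
    obtain ⟨n, hn⟩ := ih
    set x : ℤ_[p] := ((v^(p^k) : ℤ_[p]ˣ) : ℤ_[p]) - 1 with hxdef
    have hxnorm : ‖x‖ = (p:ℝ)^(-((ℓ:ℤ)+k)) := norm_pow_ppow_sub_one hodd v hℓ hv k
    obtain ⟨ε, hε⟩ := exists_unit_of_norm (n := ℓ + k) (by rw [hxnorm]; congr 1 <;> omega)
    set t' : ℤ_[p] := t * (((v^n)⁻¹ : ℤ_[p]ˣ) : ℤ_[p]) with ht'def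
    have hvnt' : ((v^n : ℤ_[p]ˣ) : ℤ_[p]) * t' = t := by
      rw [ht'def]
      have : ((v^n : ℤ_[p]ˣ) : ℤ_[p]) * (((v^n)⁻¹ : ℤ_[p]ˣ) : ℤ_[p]) = 1 := by
        rw [← Units.val_mul, mul_inv_cancel, Units.val_one]
      calc ((v^n : ℤ_[p]ˣ) : ℤ_[p]) * (t * _) = ((v^n : ℤ_[p]ˣ) : ℤ_[p]) * (((v^n)⁻¹ : ℤ_[p]ˣ) : ℤ_[p]) * t := by ring
        _ = t := by rw [this, one_mul]
    have hs : ‖t' - 1‖ ≤ (p:ℝ)^(-((ℓ:ℤ)+k)) := by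
      have : t' - 1 = (((v^n)⁻¹ : ℤ_[p]ˣ) : ℤ_[p]) * (t - ((v^n : ℤ_[p]ˣ) : ℤ_[p])) := by
        rw [ht'def, mul_sub]
        congr 1
        · ring
        · rw [← Units.val_mul, inv_mul_cancel, Units.val_one]
      rw [this, norm_mul, PadicInt.norm_units, one_mul, norm_sub_rev]
      exact hn
    -- divide s by x
    have hsdvd : (p:ℤ_[p])^(ℓ+k) ∣ (t' - 1) := dvd_iff_norm_le.mpr (by
      refine le_trans hs (le_of_eq ?_); congr 1 <;> omega)
    obtain ⟨y, hy⟩ := hsdvd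
    set r : ℤ_[p] := ((ε⁻¹ : ℤ_[p]ˣ) : ℤ_[p]) * y with hrdef
    have hxr : t' - 1 = x * r := by
      rw [hy, hε, hrdef]
      have : ((ε : ℤ_[p]ˣ) : ℤ_[p]) * ((ε⁻¹ : ℤ_[p]ˣ) : ℤ_[p]) = 1 := by
        rw [← Units.val_mul, mul_inv_cancel, Units.val_one]
      calc (p:ℤ_[p])^(ℓ+k) * y = (ε : ℤ_[p]) * (ε⁻¹ : ℤ_[p]ˣ) * ((p:ℤ_[p])^(ℓ+k) * y) := by rw [this]; ring
        _ = (ε : ℤ_[p]) * (p:ℤ_[p])^(ℓ+k) * ((ε⁻¹ : ℤ_[p]ˣ) * y) := by ring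
    obtain ⟨m, hm⟩ := exists_nat_close r
    refine ⟨n + m * p^k, ?_⟩
    have hsplit : ((v^(n + m*p^k) : ℤ_[p]ˣ) : ℤ_[p]) - t
        = ((v^n : ℤ_[p]ˣ) : ℤ_[p]) * ((1+x)^m - t') := by
      have h1 : (v^(n + m*p^k) : ℤ_[p]ˣ) = v^n * (v^(p^k))^m := by
        rw [← pow_mul, ← pow_add]
        congr 1
        ring
      have h2 : ((1:ℤ_[p])+x) = ((v^(p^k) : ℤ_[p]ˣ) : ℤ_[p]) := by rw [hxdef]; ring
      rw [h1, Units.val_mul, h2, mul_sub, ← Units.val_pow_eq_pow_val, hvnt']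
    rw [hsplit, norm_mul, PadicInt.norm_units, one_mul]
    have hdecomp : (1+x)^m - t' = ((1+x)^m - 1 - m*x) + x * ((m:ℤ_[p]) - r) := by
      have : t' = 1 + x * r := by rw [← hxr]; ring
      rw [this]; ring
    obtain ⟨c, hc⟩ := one_add_pow x m
    refine le_trans (by rw [hdecomp]; exact PadicInt.nonarchimedean _ _) (max_le ?_ ?_)
    · have : (1+x)^m - 1 - m*x = x^2*c := by rw [hc]; ring
      rw [this, norm_mul, norm_pow, hxnorm]
      calc ((p:ℝ)^(-((ℓ:ℤ)+k)))^2 * ‖c‖ ≤ ((p:ℝ)^(-((ℓ:ℤ)+k)))^2 * 1 := by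
            exact mul_le_mul_of_nonneg_left c.norm_le_one (by positivity)
        _ = (p:ℝ)^(-((ℓ:ℤ)+k)*2) := by rw [mul_one, ← zpow_natCast ((p:ℝ)^(-((ℓ:ℤ)+k))), ← zpow_mul]; norm_num
        _ ≤ (p:ℝ)^(-((ℓ:ℤ)+(k+1))) := by
            have : ((ℓ:ℤ)+(k+1)) ≤ ((ℓ:ℤ)+k)*2 := by omega
            have h2 := ppow_mono (p := p) this
            rwa [show -(((ℓ:ℤ)+k)*2) = (-((ℓ:ℤ)+k))*2 by ring] at h2
    · rw [norm_mul, hxnorm]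
      calc (p:ℝ)^(-((ℓ:ℤ)+k)) * ‖(m:ℤ_[p]) - r‖ ≤ (p:ℝ)^(-((ℓ:ℤ)+k)) * (p:ℝ)^(-(1:ℕ):ℤ) := by
            exact mul_le_mul_of_nonneg_left hm (le_of_lt (ppow_pos _))
        _ = (p:ℝ)^(-((ℓ:ℤ)+(k+1))) := by
            rw [← zpow_add₀ (by exact_mod_cast hp.out.pos.ne' : (p:ℝ) ≠ 0)]
            congr 1
            push_cast
            ring

lemma norm_pred_one : ‖((p-1 : ℕ) : ℤ_[p])‖ = 1 := by
  have hp2 := hp.out.two_le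
  rcases lt_or_eq_of_le (PadicInt.norm_le_one ((p-1 : ℕ) : ℤ_[p])) with hlt | heq
  · exfalso
    have h2 : ((p-1 : ℕ) : ℤ_[p]) = (((p-1 : ℕ) : ℤ) : ℤ_[p]) := by push_cast; ring
    rw [h2, PadicInt.norm_int_lt_one_iff_dvd] at hlt
    have := Int.le_of_dvd (by omega : (0:ℤ) < (p-1:ℕ)) hlt
    omega
  · exact heq

lemma teich (hodd : Odd p) (u : ℤ_[p]ˣ) : ∃ z : ℤ_[p], z^(p-1) = 1 ∧ ‖z - (u:ℤ_[p])‖ < 1 := by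
  have hp3 : 3 ≤ p := by obtain ⟨k, hk⟩ := hodd; have := hp.out.two_le; omega
  set F : Polynomial ℤ_[p] := Polynomial.X ^ (p-1) - 1 with hF
  set a : ℤ_[p] := (u : ℤ_[p]) with ha
  have hFa : F.eval a = a^(p-1) - 1 := by simp [hF]
  have hFd : F.derivative.eval a = ((p-1 : ℕ) : ℤ_[p]) * a^(p-2) := by
    have h : p - 1 - 1 = p - 2 := by omega
    simp [hF, Polynomial.derivative_X_pow, h]
  have hnorm1 : ‖F.derivative.eval a‖ = 1 := by
    rw [hFd, norm_mul, norm_pow, PadicInt.norm_units, one_pow, mul_one]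
    have hle : ‖((p-1 : ℕ) : ℤ_[p])‖ ≤ 1 := PadicInt.norm_le_one _
    rcases lt_or_eq_of_le hle with hlt | heq
    · exfalso
      have : ((p-1 : ℕ) : ℤ_[p]) = (((p-1 : ℕ) : ℤ) : ℤ_[p]) := by push_cast; ring
      rw [this, PadicInt.norm_int_lt_one_iff_dvd] at hlt
      have := Int.le_of_dvd (by omega : (0:ℤ) < (p-1:ℕ)) hlt
      omega
    · exact heq
  have hevnorm : ‖F.eval a‖ < 1 := by
    rw [hFa, PadicInt.norm_lt_one_iff_dvd, ← Ideal.mem_span_singleton,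
      ← PadicInt.maximalIdeal_eq_span_p, ← PadicInt.ker_toZMod, RingHom.mem_ker, map_sub,
      map_pow, map_one]
    have hu0 : PadicInt.toZMod a ≠ 0 := by
      have : IsUnit (PadicInt.toZMod a) := u.isUnit.map PadicInt.toZMod
      exact this.ne_zero
    rw [ZMod.pow_card_sub_one_eq_one hu0, sub_self]
  have hlt : ‖F.eval a‖ < ‖F.derivative.eval a‖^2 := by rw [hnorm1]; simpa using hevnorm
  obtain ⟨z, hz1, hz2, -, -⟩ := hensels_lemma hlt
  refine ⟨z, ?_, ?_⟩
  · have : z^(p-1) - 1 = 0 := by simpa [hF] using hz1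
    linear_combination this
  · rwa [Polynomial.coe_aeval_eq_eval, hnorm1] at hz2


set_option maxHeartbeats 1000000 in
theorem stmt10 (p : ℕ) [Fact p.Prime] (hodd : Odd p)
    (u : (PadicInt p)ˣ) (hu : ¬ IsOfFinOrder u) :
    ∃ (C' : Subgroup (PadicInt p)ˣ) (ℓ : ℕ), 1 ≤ ℓ ∧
      (∀ c ∈ C', IsOfFinOrder c) ∧
      (∀ c ∈ C', ((c : PadicInt p) - 1 ∈ Ideal.span {(p : PadicInt p) ^ ℓ}) → c = 1) ∧
      closure {x : PadicInt p | ∃ n : ℤ, x = ((u ^ n : (PadicInt p)ˣ) : PadicInt p)} =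
        {x : PadicInt p | ∃ c w : (PadicInt p)ˣ, c ∈ C' ∧
          ((w : PadicInt p) - 1 ∈ Ideal.span {(p : PadicInt p) ^ ℓ}) ∧
          x = ((c * w : (PadicInt p)ˣ) : PadicInt p)} := by
  have hp3 : 3 ≤ p := by obtain ⟨k, hk⟩ := hodd; have := (Fact.out : p.Prime).two_le; omega
  obtain ⟨z, hz, hzu⟩ := teich hodd u
  -- the Teichmüller unit ζ
  have hzunit : IsUnit z := IsUnit.of_mul_eq_one (z^(p-2)) (by
    rw [← pow_succ']
    rw [show p - 2 + 1 = p - 1 by omega]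
    exact hz)
  set ζ : ℤ_[p]ˣ := hzunit.unit with hζdef
  have hζval : (ζ : ℤ_[p]) = z := hzunit.unit_spec
  have hζpow : ζ^(p-1) = 1 := by
    ext
    rw [Units.val_pow_eq_pow_val, hζval, hz, Units.val_one]
  have hζfin : IsOfFinOrder ζ := isOfFinOrder_iff_pow_eq_one.mpr ⟨p-1, by omega, hζpow⟩
  set d : ℕ := orderOf ζ with hddef
  have hd0 : 0 < d := hζfin.orderOf_pos
  have hddvd : d ∣ p - 1 := orderOf_dvd_of_pow_eq_one hζpow
  have hpd : ¬ p ∣ d := by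
    intro h
    have := Nat.le_of_dvd (by omega) (h.trans hddvd)
    omega
  -- the principal unit v
  set v : ℤ_[p]ˣ := ζ⁻¹ * u with hvdef
  have hufact : ζ * v = u := by rw [hvdef, ← mul_assoc, mul_inv_cancel, one_mul]
  have hvne : v ≠ 1 := by
    intro h
    apply hu
    have : u = ζ := by rw [← hufact, h, mul_one]
    rw [this]
    exact hζfin
  have hx0 : (v:ℤ_[p]) - 1 ≠ 0 := by
    intro h
    exact hvne (Units.ext (by rw [Units.val_one]; exact sub_eq_zero.mp h))
  have hvlt : ‖(v:ℤ_[p]) - 1‖ < 1 := by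
    have h1 : (v:ℤ_[p]) - 1 = ((ζ⁻¹ : ℤ_[p]ˣ) : ℤ_[p]) * (((u:ℤ_[p])) - (ζ:ℤ_[p])) := by
      rw [hvdef, Units.val_mul, mul_sub]
      congr 1
      rw [← Units.val_mul, inv_mul_cancel, Units.val_one]
    rw [h1, norm_mul, PadicInt.norm_units, one_mul, norm_sub_rev, hζval]
    exact hzu
  set ℓ : ℕ := ((v:ℤ_[p]) - 1).valuation with hℓdef
  have hvnorm : ‖(v:ℤ_[p]) - 1‖ = (p:ℝ)^(-(ℓ:ℤ)) := by
    rw [PadicInt.norm_eq_zpow_neg_valuation hx0, hℓdef]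
  have hℓ1 : 1 ≤ ℓ := by
    by_contra h
    have hℓ0 : ℓ = 0 := by omega
    rw [hvnorm, hℓ0] at hvlt
    norm_num at hvlt
  refine ⟨Subgroup.zpowers ζ, ℓ, hℓ1, ?_, ?_, ?_⟩
  · intro c hc
    exact hζfin.of_mem_zpowers hc
  · -- trivial intersection
    intro c hc hc1
    obtain ⟨k, hk⟩ := hc
    have hcpow : (c:ℤ_[p])^(p-1) = 1 := by
      rw [← Units.val_pow_eq_pow_val, ← hk, ← zpow_natCast, ← zpow_mul, mul_comm, zpow_mul,
        zpow_natCast, hζpow, one_zpow, Units.val_one]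
    set w : ℤ_[p] := (c:ℤ_[p]) with hwdef
    have hwlt : ‖w - 1‖ < 1 := by
      rw [← PadicInt.norm_le_pow_iff_mem_span_pow] at hc1
      refine lt_of_le_of_lt hc1 ?_
      calc (p:ℝ)^(-(ℓ:ℤ)) < (p:ℝ)^(-(0:ℤ)) := ppow_strict (by omega)
        _ = 1 := by norm_num
    have hgeom : (∑ i ∈ Finset.range (p-1), w^i) * (w - 1) = 0 := by
      rw [geom_sum_mul, hcpow, sub_self]
    have hsum : ∃ T : ℤ_[p], ∑ i ∈ Finset.range (p-1), w^i = ((p-1 : ℕ) : ℤ_[p]) + (w - 1) * T := by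
      have hdvd : (w - 1) ∣ ∑ i ∈ Finset.range (p-1), (w^i - 1) := by
        apply Finset.dvd_sum
        intro i _
        simpa using sub_dvd_pow_sub_pow w 1 i
      obtain ⟨T, hT⟩ := hdvd
      refine ⟨T, ?_⟩
      have : ∑ i ∈ Finset.range (p-1), w^i
          = ((p-1 : ℕ) : ℤ_[p]) + ∑ i ∈ Finset.range (p-1), (w^i - 1) := by
        rw [Finset.sum_sub_distrib]
        simp
      rw [this, hT]
    obtain ⟨T, hT⟩ := hsum
    have hnorm_sum : ‖∑ i ∈ Finset.range (p-1), w^i‖ = 1 := by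
      have hwT : ‖(w - 1) * T‖ < 1 := by
        rw [norm_mul]
        calc ‖w-1‖ * ‖T‖ ≤ ‖w-1‖ * 1 := mul_le_mul_of_nonneg_left T.norm_le_one (norm_nonneg _)
          _ = ‖w-1‖ := mul_one _
          _ < 1 := hwlt
      have hne : ‖((p-1 : ℕ) : ℤ_[p])‖ ≠ ‖(w - 1) * T‖ := by
        rw [norm_pred_one]
        exact (ne_of_lt hwT).symm
      rw [hT, PadicInt.norm_add_eq_max_of_ne hne, norm_pred_one, max_eq_left (le_of_lt (by rw [norm_pred_one] at hne; exact lt_of_le_of_ne (by simpa using hwT.le) (Ne.symm hne) ))]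
    have hsum_ne : (∑ i ∈ Finset.range (p-1), w^i) ≠ 0 := by
      intro h
      rw [h, norm_zero] at hnorm_sum
      norm_num at hnorm_sum
    have hw1 : w - 1 = 0 := by
      rcases mul_eq_zero.mp hgeom with h | h
      · exact absurd h hsum_ne
      · exact h
    ext
    rw [Units.val_one]
    exact sub_eq_zero.mp hw1
  · -- the closure identity
    have hdz : (d:ℤ) ≠ 0 := by exact_mod_cast hd0.ne'
    have hzpow_reduce : ∀ k : ℤ, ∃ a : ℕ, a < d ∧ ζ^k = ζ^(a:ℤ) := by
      intro k
      refine ⟨(k % d).toNat, ?_, ?_⟩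
      · have h1 : 0 ≤ k % d := Int.emod_nonneg k hdz
        have h2 : k % d < d := Int.emod_lt_of_pos k (by exact_mod_cast hd0)
        omega
      · rw [Int.toNat_of_nonneg (Int.emod_nonneg k hdz), zpow_mod_orderOf]
    have hζunits : ∀ m : ℤ, ‖((ζ^m : ℤ_[p]ˣ) : ℤ_[p])‖ = 1 := fun m => PadicInt.norm_units _
    have hTball : {x : ℤ_[p] | ∃ c w : ℤ_[p]ˣ, c ∈ Subgroup.zpowers ζ ∧
          ((w : ℤ_[p]) - 1 ∈ Ideal.span {(p : ℤ_[p]) ^ ℓ}) ∧ x = ((c * w : ℤ_[p]ˣ) : ℤ_[p])}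
        = ⋃ a ∈ Finset.range d, Metric.closedBall (((ζ^(a:ℤ) : ℤ_[p]ˣ)) : ℤ_[p]) ((p:ℝ)^(-(ℓ:ℤ))) := by
      ext x
      simp only [Set.mem_setOf_eq, Set.mem_iUnion, Finset.mem_range, Metric.mem_closedBall,
        exists_prop]
      constructor
      · rintro ⟨c, w, ⟨k, hk0⟩, hw, rfl⟩
        have hk : ζ^k = c := hk0
        obtain ⟨a, ha, hζa⟩ := hzpow_reduce k
        refine ⟨a, ha, ?_⟩
        rw [dist_eq_norm]
        have heq : ((c * w : ℤ_[p]ˣ) : ℤ_[p]) - ((ζ^(a:ℤ) : ℤ_[p]ˣ) : ℤ_[p])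
            = (c:ℤ_[p]) * ((w:ℤ_[p]) - 1) := by
          rw [← hζa, hk, Units.val_mul, mul_sub, mul_one]
        rw [heq, norm_mul, ← hk, hζunits, one_mul]
        rwa [← PadicInt.norm_le_pow_iff_mem_span_pow] at hw
      · rintro ⟨a, ha, hdist⟩
        rw [dist_eq_norm] at hdist
        have hxval : ‖x - ((ζ^(a:ℤ) : ℤ_[p]ˣ) : ℤ_[p])‖ < 1 := lt_of_le_of_lt hdist (by
          calc (p:ℝ)^(-(ℓ:ℤ)) < (p:ℝ)^(-(0:ℤ)) := ppow_strict (by omega)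
            _ = 1 := by norm_num)
        have hxunit : IsUnit x := by
          rw [PadicInt.isUnit_iff]
          have hne : ‖((ζ^(a:ℤ) : ℤ_[p]ˣ) : ℤ_[p])‖ ≠ ‖x - ((ζ^(a:ℤ) : ℤ_[p]ˣ) : ℤ_[p])‖ := by
            rw [hζunits]
            exact (ne_of_lt hxval).symm
          have hx : x = ((ζ^(a:ℤ) : ℤ_[p]ˣ) : ℤ_[p]) + (x - ((ζ^(a:ℤ) : ℤ_[p]ˣ) : ℤ_[p])) := by ring
          nth_rewrite 1 [hx]
          rw [PadicInt.norm_add_eq_max_of_ne hne, hζunits, max_eq_left hxval.le]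
        obtain ⟨xu, hxu⟩ := hxunit
        refine ⟨ζ^(a:ℤ), (ζ^(a:ℤ))⁻¹ * xu, ⟨(a:ℤ), rfl⟩, ?_, ?_⟩
        · rw [← PadicInt.norm_le_pow_iff_mem_span_pow]
          have heq : (((ζ^(a:ℤ))⁻¹ * xu : ℤ_[p]ˣ) : ℤ_[p]) - 1
              = (((ζ^(a:ℤ))⁻¹ : ℤ_[p]ˣ) : ℤ_[p]) * (x - ((ζ^(a:ℤ) : ℤ_[p]ˣ) : ℤ_[p])) := by
            rw [Units.val_mul, mul_sub, hxu]
            congr 1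
            rw [← Units.val_mul, inv_mul_cancel, Units.val_one]
          rw [heq, norm_mul, PadicInt.norm_units, one_mul]
          exact hdist
        · rw [← mul_assoc, mul_inv_cancel, one_mul, hxu]
    rw [hTball]
    refine Set.Subset.antisymm ?_ ?_
    · refine closure_minimal ?_ ?_
      · rintro x ⟨n, rfl⟩
        obtain ⟨a, ha, hζa⟩ := hzpow_reduce n
        simp only [Set.mem_iUnion, Finset.mem_range, Metric.mem_closedBall, exists_prop]
        refine ⟨a, ha, ?_⟩
        rw [dist_eq_norm]
        have heq : ((u^n : ℤ_[p]ˣ) : ℤ_[p]) - ((ζ^(a:ℤ) : ℤ_[p]ˣ) : ℤ_[p])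
            = ((ζ^n : ℤ_[p]ˣ) : ℤ_[p]) * (((v^n : ℤ_[p]ˣ) : ℤ_[p]) - 1) := by
          rw [← hζa, ← hufact, mul_zpow, Units.val_mul, mul_sub, mul_one]
        rw [heq, norm_mul, hζunits, one_mul]
        exact zpow_sub_one_norm_le v hvnorm.le n
      · exact (Finset.range d).finite_toSet.isClosed_biUnion
          (fun i _ => Metric.isClosed_closedBall)
    · rintro x hx
      simp only [Set.mem_iUnion, Finset.mem_range, Metric.mem_closedBall, exists_prop] at hx
      obtain ⟨a, ha, hdist⟩ := hx
      rw [Metric.mem_closure_iff]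
      intro ε hε
      -- choose j
      have hpinv : (p:ℝ)⁻¹ < 1 := by
        rw [inv_lt_one_iff₀]
        right
        exact_mod_cast (Fact.out : p.Prime).one_lt
      obtain ⟨j, hj⟩ := exists_pow_lt_of_lt_one hε hpinv
      have hjlt : (p:ℝ)^(-((ℓ:ℤ)+j)) < ε := by
        refine lt_of_le_of_lt ?_ hj
        have h1 : (p:ℝ)⁻¹^j = (p:ℝ)^(-(j:ℤ)) := by
          rw [← zpow_natCast ((p:ℝ)⁻¹), inv_zpow, ← zpow_neg]
        rw [h1]
        exact ppow_mono (by omega)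
      -- the unit x as c * w: recover from ball membership
      rw [dist_eq_norm] at hdist
      have hxval : ‖x - ((ζ^(a:ℤ) : ℤ_[p]ˣ) : ℤ_[p])‖ < 1 := lt_of_le_of_lt hdist (by
        calc (p:ℝ)^(-(ℓ:ℤ)) < (p:ℝ)^(-(0:ℤ)) := ppow_strict (by omega)
          _ = 1 := by norm_num)
      have hxunit : IsUnit x := by
        rw [PadicInt.isUnit_iff]
        have hne : ‖((ζ^(a:ℤ) : ℤ_[p]ˣ) : ℤ_[p])‖ ≠ ‖x - ((ζ^(a:ℤ) : ℤ_[p]ˣ) : ℤ_[p])‖ := by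
          rw [hζunits]
          exact (ne_of_lt hxval).symm
        have hx : x = ((ζ^(a:ℤ) : ℤ_[p]ˣ) : ℤ_[p]) + (x - ((ζ^(a:ℤ) : ℤ_[p]ˣ) : ℤ_[p])) := by ring
        nth_rewrite 1 [hx]
        rw [PadicInt.norm_add_eq_max_of_ne hne, hζunits, max_eq_left hxval.le]
      obtain ⟨xu, hxu⟩ := hxunit
      set w : ℤ_[p]ˣ := (ζ^(a:ℤ))⁻¹ * xu with hwdef
      have hwnorm : ‖(w:ℤ_[p]) - 1‖ ≤ (p:ℝ)^(-(ℓ:ℤ)) := by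
        have heq : ((w : ℤ_[p]ˣ) : ℤ_[p]) - 1
            = (((ζ^(a:ℤ))⁻¹ : ℤ_[p]ˣ) : ℤ_[p]) * (x - ((ζ^(a:ℤ) : ℤ_[p]ˣ) : ℤ_[p])) := by
          rw [hwdef, Units.val_mul, mul_sub, hxu]
          congr 1
          rw [← Units.val_mul, inv_mul_cancel, Units.val_one]
        rw [heq, norm_mul, PadicInt.norm_units, one_mul]
        exact hdist
      have hxfact : x = ((ζ^(a:ℤ) : ℤ_[p]ˣ) : ℤ_[p]) * ((w : ℤ_[p]ˣ) : ℤ_[p]) := by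
        rw [hwdef, Units.val_mul, ← mul_assoc, ← Units.val_mul, mul_inv_cancel, Units.val_one,
          one_mul, hxu]
      -- approximate w by powers of v
      obtain ⟨n₀, hn₀⟩ := dense_claim hodd v hℓ1 hvnorm j ((w : ℤ_[p]ˣ) : ℤ_[p]) hwnorm
      -- CRT
      have hco : Nat.Coprime d (p^j) :=
        Nat.Coprime.pow_right j (((Fact.out : p.Prime).coprime_iff_not_dvd.mpr hpd).symm)
      obtain ⟨N, hN1, hN2⟩ := Nat.chineseRemainder hco a n₀
      refine ⟨((u^(N:ℤ) : ℤ_[p]ˣ) : ℤ_[p]), ⟨(N:ℤ), rfl⟩, ?_⟩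
      -- ζ part
      have hζN : ζ^((N:ℕ):ℤ) = ζ^(a:ℤ) := by
        have h5 : ζ ^ ((N:ℕ) % d) = ζ ^ (N:ℕ) := pow_mod_orderOf ζ N
        have h6 : (N:ℕ) % d = a := by
          have h7 : (N:ℕ) % d = a % d := hN1
          rwa [Nat.mod_eq_of_lt ha] at h7
        rw [zpow_natCast, zpow_natCast, ← h5, h6]
      -- v part
      have hdvd : ((p^j : ℕ) : ℤ) ∣ ((n₀:ℤ) - (N:ℤ)) := hN2.dvd
      obtain ⟨m, hm⟩ := hdvd
      set g : ℤ_[p]ˣ := v^(p^j) with hgdef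
      have hg : ‖(g:ℤ_[p]) - 1‖ = (p:ℝ)^(-((ℓ:ℤ)+j)) := norm_pow_ppow_sub_one hodd v hℓ1 hvnorm j
      have hvN : v^((N:ℕ):ℤ) = v^((n₀:ℕ):ℤ) * g^(-m) := by
        rw [hgdef, ← zpow_natCast v (p^j), ← zpow_mul, ← zpow_add]
        congr 1
        have h8 : ((n₀:ℤ)) - (N:ℤ) = ((p^j : ℕ) : ℤ) * m := hm
        linarith
      have hvNnorm : ‖((v^((N:ℕ):ℤ) : ℤ_[p]ˣ) : ℤ_[p]) - ((w : ℤ_[p]ˣ) : ℤ_[p])‖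
          ≤ (p:ℝ)^(-((ℓ:ℤ)+j)) := by
        have hsplit : ((v^((N:ℕ):ℤ) : ℤ_[p]ˣ) : ℤ_[p]) - ((w : ℤ_[p]ˣ) : ℤ_[p])
            = ((v^((n₀:ℕ):ℤ) : ℤ_[p]ˣ) : ℤ_[p]) * (((g^(-m) : ℤ_[p]ˣ) : ℤ_[p]) - 1)
              + (((v^((n₀:ℕ):ℤ) : ℤ_[p]ˣ) : ℤ_[p]) - ((w : ℤ_[p]ˣ) : ℤ_[p])) := by
          rw [hvN, Units.val_mul]
          ring
        rw [hsplit]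
        refine le_trans (PadicInt.nonarchimedean _ _) (max_le ?_ ?_)
        · rw [norm_mul, PadicInt.norm_units, one_mul]
          exact zpow_sub_one_norm_le g hg.le (-m)
        · rw [zpow_natCast]
          exact hn₀
      rw [dist_eq_norm]
      refine lt_of_le_of_lt ?_ hjlt
      have hfinal : x - ((u^((N:ℕ):ℤ) : ℤ_[p]ˣ) : ℤ_[p])
          = ((ζ^(a:ℤ) : ℤ_[p]ˣ) : ℤ_[p])
            * (((w : ℤ_[p]ˣ) : ℤ_[p]) - ((v^((N:ℕ):ℤ) : ℤ_[p]ˣ) : ℤ_[p])) := by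
        rw [hxfact, ← hufact, mul_zpow, ← hζN, Units.val_mul, mul_sub]
        congr 1 <;> rw [hζN]
      rw [hfinal, norm_mul, hζunits, one_mul, norm_sub_rev]
      exact hvNnorm
end

section
/- Let p be a prime and r a positive integer with p ≡ 1 (mod r). Let 𝒪 = ℤ[1/p]. If A ∈ SL₂(𝒪) has diagonal entries 1 − p^α and 1 − p^β for some integers α, β, and A = E₁₂(a)E₂₁(b)E₁₂(c)E₂₁(d) for some a,b,c,d ∈ 𝒪, then A ≡ ±[[0,1],[−1,0]] modulo r𝒪. -/
abbrev ZInvP (p : ℕ) := Localization.Away (p : ℤ)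

set_option maxHeartbeats 1000000 in
theorem stmt14 (p r : ℕ) (hp : p.Prime) (hr : 0 < r) (hpr : (r : ℤ) ∣ (p : ℤ) - 1)
    (up : (ZInvP p)ˣ) (hup : (up : ZInvP p) = algebraMap ℤ (ZInvP p) (p : ℤ))
    (a b c d : ZInvP p) (α β : ℤ) (A : Matrix (Fin 2) (Fin 2) (ZInvP p))
    (hA : A = !![1, a; 0, 1] * !![1, 0; b, 1] * !![1, c; 0, 1] * !![1, 0; d, 1])
    (h00 : A 0 0 = 1 - ((up ^ α : (ZInvP p)ˣ) : ZInvP p))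
    (h11 : A 1 1 = 1 - ((up ^ β : (ZInvP p)ˣ) : ZInvP p)) :
    ∃ ε : ZInvP p, (ε = 1 ∨ ε = -1) ∧
      ∀ i j, A i j - ε * (!![0, 1; -1, 0] : Matrix (Fin 2) (Fin 2) (ZInvP p)) i j ∈
        Ideal.span {(r : ZInvP p)} := by
  -- entries of A
  have hA11 : A 1 1 = b * c + 1 := by
    rw [hA]; simp [Matrix.mul_apply, Fin.sum_univ_succ]; all_goals ring
  have hA01 : A 0 1 = c + a * (b * c + 1) := by
    rw [hA]; simp [Matrix.mul_apply, Fin.sum_univ_succ]; all_goals ring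
  have hA10 : A 1 0 = b + (b * c + 1) * d := by
    rw [hA]; simp [Matrix.mul_apply, Fin.sum_univ_succ]; all_goals ring
  obtain ⟨π, hmem⟩ :
      ∃ π : ZInvP p →+* ZInvP p ⧸ Ideal.span {(r : ZInvP p)},
        ∀ x, π x = 0 ↔ x ∈ Ideal.span {(r : ZInvP p)} :=
    ⟨Ideal.Quotient.mk _, fun _ => Ideal.Quotient.eq_zero_iff_mem⟩
  -- π(p) = 1
  have hpI : π (algebraMap ℤ (ZInvP p) (p : ℤ)) = 1 := by
    obtain ⟨t, ht⟩ := hpr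
    have hmem' : algebraMap ℤ (ZInvP p) ((p : ℤ) - 1) ∈ Ideal.span {(r : ZInvP p)} := by
      rw [Ideal.mem_span_singleton, ht, map_mul]
      exact Dvd.intro _ (by rw [map_natCast])
    have h2 : π (algebraMap ℤ (ZInvP p) ((p : ℤ) - 1)) = 0 := (hmem _).2 hmem'
    rw [map_sub, map_sub, map_one, map_one, sub_eq_zero] at h2
    exact h2
  have hu1 : π (up : ZInvP p) = 1 := by rw [hup]; exact hpI
  -- π(up^γ) = 1 for all γ : ℤ
  have huz : ∀ γ : ℤ, π ((up ^ γ : (ZInvP p)ˣ) : ZInvP p) = 1 := by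
    intro γ
    have hv : Units.map π.toMonoidHom up = 1 := Units.ext (by simpa using hu1)
    have h7 : Units.map π.toMonoidHom (up ^ γ) = 1 := by rw [map_zpow, hv, one_zpow]
    have h8 := congrArg (Units.val) h7
    rw [Units.coe_map] at h8
    simpa using h8
  -- units map to ±1
  have key : ∀ x : (ZInvP p)ˣ, π (x : ZInvP p) = 1 ∨ π (x : ZInvP p) = -1 := by
    intro x
    have hinj : Function.Injective (algebraMap ℤ (ZInvP p)) :=
      IsLocalization.injective _ (powers_le_nonZeroDivisors_of_noZeroDivisors
        (show (p:ℤ) ≠ 0 by exact_mod_cast hp.ne_zero))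
    obtain ⟨⟨m, t⟩, hx⟩ := IsLocalization.surj (Submonoid.powers (p:ℤ)) (x : ZInvP p)
    obtain ⟨n, hn⟩ := t.2
    obtain ⟨⟨m', t'⟩, hx'⟩ :=
      IsLocalization.surj (Submonoid.powers (p:ℤ)) ((x⁻¹ : (ZInvP p)ˣ) : ZInvP p)
    obtain ⟨n', hn'⟩ := t'.2
    simp only at hx hx' hn hn'
    have hxx : (x : ZInvP p) * ((x⁻¹ : (ZInvP p)ˣ) : ZInvP p) = 1 := x.mul_inv
    have hmm' : m * m' = (p:ℤ) ^ (n + n') := by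
      apply hinj
      rw [map_mul, ← hx, ← hx', pow_add, map_mul, ← hn, ← hn']
      linear_combination
        (algebraMap ℤ (ZInvP p) ((p:ℤ)^n) * algebraMap ℤ (ZInvP p) ((p:ℤ)^n')) * hxx
    have hdvd : m.natAbs ∣ p ^ (n + n') := by
      have h1 : m ∣ (p:ℤ) ^ (n + n') := ⟨m', hmm'.symm⟩
      have h2 : (m.natAbs : ℤ) ∣ (p:ℤ) ^ (n + n') := Int.natAbs_dvd.2 h1
      exact_mod_cast h2
    obtain ⟨j, _, hj⟩ := (Nat.dvd_prime_pow hp).1 hdvd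
    have hπt : π (algebraMap ℤ (ZInvP p) ↑t) = 1 := by
      rw [← hn, map_pow, map_pow, hpI]
      exact one_pow (M := ZInvP p ⧸ Ideal.span {(r : ZInvP p)}) n
    have hπx : π (x : ZInvP p) = π (algebraMap ℤ (ZInvP p) m) := by
      have h3 := congrArg π hx
      rw [map_mul, hπt] at h3
      linear_combination h3
    have hmval : m = (p:ℤ)^j ∨ m = -((p:ℤ)^j) := by
      rcases Int.natAbs_eq m with hm | hm
      · left; rw [hm, hj]; push_cast; ring
      · right; rw [hm, hj]; push_cast; ring
    rcases hmval with hm | hm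
    · left
      rw [hπx, hm, map_pow, map_pow, hpI]
      exact one_pow (M := ZInvP p ⧸ Ideal.span {(r : ZInvP p)}) j
    · right
      rw [hπx, hm, map_neg, map_neg, map_pow, map_pow, hpI]
      exact congrArg Neg.neg (one_pow (M := ZInvP p ⧸ Ideal.span {(r : ZInvP p)}) j)
  -- b * c = -(up^β)
  have hbc : b * c = -((up ^ β : (ZInvP p)ˣ) : ZInvP p) := by
    have h4 := hA11.symm.trans h11
    linear_combination h4
  have hbcq : π (b * c) = -1 := by rw [hbc, map_neg, huz]
  have h11q : π (b * c + 1) = 0 := by rw [map_add, hbcq, map_one]; ring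
  -- b is a unit
  have hub : IsUnit b := by
    have h5 : IsUnit (b * c) := hbc ▸ ((up ^ β).isUnit).neg
    exact isUnit_of_mul_isUnit_left h5
  obtain ⟨w, hw⟩ := hub
  have hπb : π b = 1 ∨ π b = -1 := by rw [← hw]; exact key w
  have h00q : π (A 0 0) = 0 := by rw [h00, map_sub, map_one, huz]; ring
  have h11q' : π (A 1 1) = 0 := by rw [hA11]; exact h11q
  have h01q : π (A 0 1) = π c := by
    rw [hA01, map_add, map_mul]
    linear_combination π a * h11q
  have h10q : π (A 1 0) = π b := by
    rw [hA10, map_add, map_mul]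
    linear_combination π d * h11q
  have hcq : π c = - π b := by
    have h6 := hbcq
    rw [map_mul] at h6
    rcases hπb with hs | hs
    · rw [hs] at h6 ⊢; linear_combination h6
    · rw [hs] at h6 ⊢; linear_combination -h6
  rcases hπb with hs | hs
  · refine ⟨-1, Or.inr rfl, ?_⟩
    intro i j
    apply (hmem _).1
    fin_cases i <;> fin_cases j
    · show π (A 0 0 - -1 * (0 : ZInvP p)) = 0
      simp only [map_sub, map_mul, map_neg, map_one, map_zero]
      linear_combination h00q
    · show π (A 0 1 - -1 * (1 : ZInvP p)) = 0
      simp only [map_sub, map_mul, map_neg, map_one, map_zero]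
      linear_combination h01q + hcq - hs
    · show π (A 1 0 - -1 * (-1 : ZInvP p)) = 0
      simp only [map_sub, map_mul, map_neg, map_one, map_zero]
      linear_combination h10q + hs
    · show π (A 1 1 - -1 * (0 : ZInvP p)) = 0
      simp only [map_sub, map_mul, map_neg, map_one, map_zero]
      linear_combination h11q'
  · refine ⟨1, Or.inl rfl, ?_⟩
    intro i j
    apply (hmem _).1
    fin_cases i <;> fin_cases j
    · show π (A 0 0 - 1 * (0 : ZInvP p)) = 0
      simp only [map_sub, map_mul, map_neg, map_one, map_zero]
      linear_combination h00q
    · show π (A 0 1 - 1 * (1 : ZInvP p)) = 0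
      simp only [map_sub, map_mul, map_neg, map_one, map_zero]
      linear_combination h01q + hcq - hs
    · show π (A 1 0 - 1 * (-1 : ZInvP p)) = 0
      simp only [map_sub, map_mul, map_neg, map_one, map_zero]
      linear_combination h10q + hs
    · show π (A 1 1 - 1 * (0 : ZInvP p)) = 0
      simp only [map_sub, map_mul, map_neg, map_one, map_zero]
      linear_combination h11q'
end

section
/- Let p > 7 be a prime such that p − 2 is composite, say p − 2 = r₁·r₂ with integers r₁, r₂ > 1. Then the matrix A = [[1−p, r₁·p],[r₂, 1−p]] lies in SL₂(ℤ[1/p]) but is not a product of four elementary matrices over ℤ[1/p]. -/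
/-- A matrix is elementary if it is `E₁₂(λ)` or `E₂₁(λ)`. -/
def IsElemMatrix {R : Type*} [CommRing R] (M : Matrix (Fin 2) (Fin 2) R) : Prop :=
  ∃ lam : R, M = !![1, lam; 0, 1] ∨ M = !![1, 0; lam, 1]

section MatrixAux
variable {R : Type*} [CommRing R]

/-- Upper triangular elementary matrix. -/
def Tm (x : R) : Matrix (Fin 2) (Fin 2) R := !![1, x; 0, 1]
/-- Lower triangular elementary matrix. -/
def Bm (x : R) : Matrix (Fin 2) (Fin 2) R := !![1, 0; x, 1]

@[simp] lemma Tm_zero : Tm (0:R) = 1 := by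
  ext i j; fin_cases i <;> fin_cases j <;> simp [Tm]

@[simp] lemma Bm_zero : Bm (0:R) = 1 := by
  ext i j; fin_cases i <;> fin_cases j <;> simp [Bm]

@[simp] lemma Tm_Tm (x y : R) (M : Matrix (Fin 2) (Fin 2) R) :
    Tm x * (Tm y * M) = Tm (x+y) * M := by
  rw [← mul_assoc]; congr 1
  ext i j; fin_cases i <;> fin_cases j <;>
    (simp [Tm, Matrix.mul_apply, Fin.sum_univ_two]; try ring)

@[simp] lemma Bm_Bm (x y : R) (M : Matrix (Fin 2) (Fin 2) R) :
    Bm x * (Bm y * M) = Bm (x+y) * M := by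
  rw [← mul_assoc]; congr 1
  ext i j; fin_cases i <;> fin_cases j <;>
    (simp [Bm, Matrix.mul_apply, Fin.sum_univ_two]; try ring)

@[simp] lemma Tm_mul_Tm (x y : R) : Tm x * Tm y = Tm (x+y) := by
  have := Tm_Tm x y (1 : Matrix (Fin 2) (Fin 2) R); simpa using this

@[simp] lemma Bm_mul_Bm (x y : R) : Bm x * Bm y = Bm (x+y) := by
  have := Bm_Bm x y (1 : Matrix (Fin 2) (Fin 2) R); simpa using this

lemma prodTBTB (a b c d : R) : Tm a * Bm b * Tm c * Bm d =
    !![(1+a*b) + ((1+a*b)*c+a)*d, (1+a*b)*c+a; b + (b*c+1)*d, b*c+1] := by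
  ext i j; fin_cases i <;> fin_cases j <;>
    (simp [Tm, Bm, Matrix.mul_apply, Fin.sum_univ_two]; try ring)

lemma prodBTBT (a b c d : R) : Bm a * Tm b * Bm c * Tm d =
    !![1+b*c, (1+b*c)*d + b; a + (a*b+1)*c, (a+(a*b+1)*c)*d + (a*b+1)] := by
  ext i j; fin_cases i <;> fin_cases j <;>
    (simp [Tm, Bm, Matrix.mul_apply, Fin.sum_univ_two]; try ring)

lemma elem_iff {M : Matrix (Fin 2) (Fin 2) R} (h : IsElemMatrix M) :
    ∃ x : R, M = Tm x ∨ M = Bm x := h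

lemma alt1 (L : List (Matrix (Fin 2) (Fin 2) R)) (hL : L.length ≤ 1)
    (hE : ∀ M ∈ L, IsElemMatrix M) :
    ∃ a : R, L.prod = Tm a ∨ L.prod = Bm a := by
  match L with
  | [] => exact ⟨0, Or.inl (by simp)⟩
  | [M] =>
    obtain ⟨x, hx | hx⟩ := elem_iff (hE M (by simp))
    · exact ⟨x, Or.inl (by simp [hx])⟩
    · exact ⟨x, Or.inr (by simp [hx])⟩
  | M :: M' :: L => simp at hL

lemma alt2 (L : List (Matrix (Fin 2) (Fin 2) R)) (hL : L.length ≤ 2)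
    (hE : ∀ M ∈ L, IsElemMatrix M) :
    ∃ a b : R, L.prod = Tm a * Bm b ∨ L.prod = Bm a * Tm b := by
  match L with
  | [] => exact ⟨0, 0, Or.inl (by simp)⟩
  | M :: L' =>
    obtain ⟨a, ha | ha⟩ := alt1 L' (by simpa using hL) (fun N hN => hE N (by simp [hN]))
    <;> obtain ⟨x, hx | hx⟩ := elem_iff (hE M (by simp))
    · exact ⟨x + a, 0, Or.inl (by simp [List.prod_cons, hx, ha])⟩
    · exact ⟨x, a, Or.inr (by simp [List.prod_cons, hx, ha])⟩
    · exact ⟨x, a, Or.inl (by simp [List.prod_cons, hx, ha])⟩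
    · exact ⟨x + a, 0, Or.inr (by simp [List.prod_cons, hx, ha])⟩

lemma alt3 (L : List (Matrix (Fin 2) (Fin 2) R)) (hL : L.length ≤ 3)
    (hE : ∀ M ∈ L, IsElemMatrix M) :
    ∃ a b c : R, L.prod = Tm a * Bm b * Tm c ∨ L.prod = Bm a * Tm b * Bm c := by
  match L with
  | [] => exact ⟨0, 0, 0, Or.inl (by simp)⟩
  | M :: L' =>
    obtain ⟨a, b, hab | hab⟩ := alt2 L' (by simp at hL; omega) (fun N hN => hE N (by simp [hN]))
    <;> obtain ⟨x, hx | hx⟩ := elem_iff (hE M (by simp))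
    · exact ⟨x + a, b, 0, Or.inl (by simp [List.prod_cons, hx, hab, mul_assoc])⟩
    · exact ⟨x, a, b, Or.inr (by simp [List.prod_cons, hx, hab, mul_assoc])⟩
    · exact ⟨x, a, b, Or.inl (by simp [List.prod_cons, hx, hab, mul_assoc])⟩
    · exact ⟨x + a, b, 0, Or.inr (by simp [List.prod_cons, hx, hab, mul_assoc])⟩

lemma alt4 (L : List (Matrix (Fin 2) (Fin 2) R)) (hL : L.length ≤ 4)
    (hE : ∀ M ∈ L, IsElemMatrix M) :
    ∃ a b c d : R, L.prod = Tm a * Bm b * Tm c * Bm d ∨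
      L.prod = Bm a * Tm b * Bm c * Tm d := by
  match L with
  | [] => exact ⟨0, 0, 0, 0, Or.inl (by simp)⟩
  | M :: L' =>
    obtain ⟨a, b, c, habc | habc⟩ := alt3 L' (by simp at hL; omega)
      (fun N hN => hE N (by simp [hN]))
    <;> obtain ⟨x, hx | hx⟩ := elem_iff (hE M (by simp))
    · exact ⟨x + a, b, c, 0, Or.inl (by simp [List.prod_cons, hx, habc, mul_assoc])⟩
    · exact ⟨x, a, b, c, Or.inr (by simp [List.prod_cons, hx, habc, mul_assoc])⟩
    · exact ⟨x, a, b, c, Or.inl (by simp [List.prod_cons, hx, habc, mul_assoc])⟩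
    · exact ⟨x + a, b, c, 0, Or.inr (by simp [List.prod_cons, hx, habc, mul_assoc])⟩

end MatrixAux

lemma cast_p_eq_one (p : ℕ) (hp : 1 ≤ p) : ((p:ℤ) : ZMod (p-1)) = 1 := by
  have h : ((p:ℤ) : ZMod (p-1)) = ((p:ℕ) : ZMod (p-1)) := by push_cast; ring
  rw [h, show p = (p-1)+1 by omega]
  push_cast [ZMod.natCast_self]
  ring

lemma natCast_p_eq_one (p : ℕ) (hp : 1 ≤ p) : ((p:ℕ) : ZMod (p-1)) = 1 := by
  have := cast_p_eq_one p hp; push_cast at this; exact this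

/-- The reduction map `ℤ[1/p] → ℤ/(p-1)` (well defined since `p ≡ 1 mod p-1`). -/
noncomputable def phi (p : ℕ) (hp : 1 ≤ p) : ZInvP p →+* ZMod (p-1) :=
  IsLocalization.Away.lift (S := ZInvP p) (g := Int.castRingHom (ZMod (p-1))) (p:ℤ)
    (show IsUnit ((p:ℤ) : ZMod (p-1)) by rw [cast_p_eq_one p hp]; exact isUnit_one)

lemma phi_algebraMap (p : ℕ) (hp : 1 ≤ p) (x : ℤ) :
    phi p hp (algebraMap ℤ (ZInvP p) x) = (x : ZMod (p-1)) :=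
  IsLocalization.Away.lift_eq _ _ _

/-- If `b * c = -p` in `ℤ[1/p]`, then `b` is a unit `± p^k`, hence maps to `±1` in
`ℤ/(p-1)`. -/
lemma phi_unit (p : ℕ) (hp : p.Prime) (b c : ZInvP p)
    (hbc : b * c = -((p:ℕ) : ZInvP p)) :
    phi p hp.one_lt.le b = 1 ∨ phi p hp.one_lt.le b = -1 := by
  have hp0 : (p:ℤ) ≠ 0 := by exact_mod_cast hp.ne_zero
  have inj : Function.Injective (algebraMap ℤ (ZInvP p)) :=
    IsLocalization.injective (ZInvP p) (powers_le_nonZeroDivisors_of_noZeroDivisors hp0)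
  obtain ⟨⟨b₀, s⟩, hb⟩ := IsLocalization.surj (Submonoid.powers (p:ℤ)) b
  obtain ⟨⟨c₀, t⟩, hc⟩ := IsLocalization.surj (Submonoid.powers (p:ℤ)) c
  obtain ⟨n, hn⟩ := s.2
  obtain ⟨m, hm⟩ := t.2
  have hps : (s : ℤ) = (p:ℤ)^n := hn.symm
  have hpt : (t : ℤ) = (p:ℤ)^m := hm.symm
  have key : b₀ * c₀ = -(p:ℤ)^(n+m+1) := by
    apply inj
    have h1 : (b * algebraMap ℤ (ZInvP p) (s:ℤ)) * (c * algebraMap ℤ (ZInvP p) (t:ℤ))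
        = algebraMap ℤ (ZInvP p) b₀ * algebraMap ℤ (ZInvP p) c₀ := by rw [hb, hc]
    rw [map_mul, ← h1, hps, hpt]
    push_cast
    linear_combination (((p:ℕ) : ZInvP p))^n * (((p:ℕ) : ZInvP p))^m * hbc
  have hdvd : b₀.natAbs ∣ p ^ (n+m+1) := by
    have hd : b₀ ∣ -(p:ℤ)^(n+m+1) := ⟨c₀, key.symm⟩
    have h2 : b₀ ∣ (p:ℤ)^(n+m+1) := (dvd_neg.mp hd)
    have h3 := Int.natAbs_dvd_natAbs.mpr h2
    simpa [Int.natAbs_pow] using h3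
  obtain ⟨j, hj, hbj⟩ := (Nat.dvd_prime_pow hp).mp hdvd
  have hphi : phi p hp.one_lt.le b * ((p:ℤ)^n : ZMod (p-1)) = (b₀ : ZMod (p-1)) := by
    have := congrArg (phi p hp.one_lt.le) hb
    rw [map_mul, phi_algebraMap, phi_algebraMap] at this
    simp only at this
    rw [hps] at this
    push_cast at this ⊢
    exact this
  rw [cast_p_eq_one p hp.one_lt.le] at hphi
  simp at hphi
  rcases Int.natAbs_eq b₀ with h | h
  · left
    rw [hphi, h, hbj]
    push_cast [cast_p_eq_one p hp.one_lt.le, natCast_p_eq_one p hp.one_lt.le]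
    exact one_pow j
  · right
    rw [hphi, h, hbj]
    push_cast [cast_p_eq_one p hp.one_lt.le, natCast_p_eq_one p hp.one_lt.le]
    simp

/-- The key congruence argument: `b*c = -p` forces `b ≡ ±1 (mod p-1)`, which is
incompatible with `b ≡ s` or `b ≡ s·p (mod p-1)` when `1 < s < p-2`. -/
lemma core (p : ℕ) (hp : p.Prime) (s : ℤ) (hs1 : 1 < s)
    (hs2 : s < (p:ℤ) - 2) (b c d : ZInvP p)
    (hbc : b * c = -((p:ℕ):ZInvP p))
    (hb : b + (1 - ((p:ℕ):ZInvP p)) * d = (s : ZInvP p) ∨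
          b + (1 - ((p:ℕ):ZInvP p)) * d = (s : ZInvP p) * ((p:ℕ):ZInvP p)) : False := by
  have h1 := phi_unit p hp b c hbc
  have hps : phi p hp.one_lt.le b = (s : ZMod (p-1)) := by
    rcases hb with hb | hb <;>
    · have h2 := congrArg (phi p hp.one_lt.le) hb
      simp [natCast_p_eq_one p hp.one_lt.le] at h2
      exact h2
  haveI : NeZero (p-1) := ⟨by omega⟩
  have hcast : ((p - 1 : ℕ) : ℤ) = (p:ℤ) - 1 := by
    push_cast [Nat.cast_sub hp.one_lt.le]; ring
  rcases h1 with h1 | h1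
  · rw [hps] at h1
    have h3 : ((s - 1 : ℤ) : ZMod (p-1)) = 0 := by push_cast [h1]; ring
    have hd := (ZMod.intCast_zmod_eq_zero_iff_dvd _ _).mp h3
    have h4 := Int.le_of_dvd (by omega) hd
    rw [hcast] at h4
    omega
  · rw [hps] at h1
    have h3 : ((s + 1 : ℤ) : ZMod (p-1)) = 0 := by push_cast [h1]; ring
    have hd := (ZMod.intCast_zmod_eq_zero_iff_dvd _ _).mp h3
    have h4 := Int.le_of_dvd (by omega) hd
    rw [hcast] at h4
    omega

theorem stmt15 (p : ℕ) (hp : p.Prime) (hp7 : 7 < p) (r₁ r₂ : ℤ)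
    (h1 : 1 < r₁) (h2 : 1 < r₂) (hcomp : (p : ℤ) - 2 = r₁ * r₂) :
    (!![1 - (p : ZInvP p), (r₁ : ZInvP p) * (p : ZInvP p);
        (r₂ : ZInvP p), 1 - (p : ZInvP p)] : Matrix (Fin 2) (Fin 2) (ZInvP p)).det = 1 ∧
    ¬ ∃ L : List (Matrix (Fin 2) (Fin 2) (ZInvP p)), L.length ≤ 4 ∧
        (∀ M ∈ L, IsElemMatrix M) ∧
        L.prod = !![1 - (p : ZInvP p), (r₁ : ZInvP p) * (p : ZInvP p);
          (r₂ : ZInvP p), 1 - (p : ZInvP p)] := by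
  have hc : (r₁ : ZInvP p) * (r₂ : ZInvP p) = (p : ZInvP p) - 2 := by
    have h := congrArg (fun x : ℤ => (x : ZInvP p)) hcomp
    push_cast at h
    linear_combination -h
  constructor
  · rw [Matrix.det_fin_two_of]
    linear_combination (-(p : ZInvP p)) * hc
  · rintro ⟨L, hL, hE, hP⟩
    obtain ⟨a, b, c, d, h | h⟩ := alt4 L hL hE
    · -- pattern E₁₂ E₂₁ E₁₂ E₂₁
      rw [hP, prodTBTB] at h
      have h22 := congr_fun (congr_fun h.symm 1) 1
      have h21 := congr_fun (congr_fun h.symm 1) 0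
      simp at h22 h21
      have hbc : b * c = -((p:ℕ) : ZInvP p) := by linear_combination h22
      have hb : b + (1 - ((p:ℕ):ZInvP p)) * d = (r₂ : ZInvP p) := by
        linear_combination h21 - d * hbc
      have hr2 : r₂ < (p:ℤ) - 2 := by nlinarith
      exact core p hp r₂ h2 hr2 b c d hbc (Or.inl hb)
    · -- pattern E₂₁ E₁₂ E₂₁ E₁₂
      rw [hP, prodBTBT] at h
      have h11 := congr_fun (congr_fun h.symm 0) 0
      have h12 := congr_fun (congr_fun h.symm 0) 1
      simp at h11 h12
      have hbc : b * c = -((p:ℕ) : ZInvP p) := by linear_combination h11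
      have hb : b + (1 - ((p:ℕ):ZInvP p)) * d = (r₁ : ZInvP p) * ((p:ℕ):ZInvP p) := by
        linear_combination h12 - d * hbc
      have hr1 : r₁ < (p:ℤ) - 2 := by nlinarith
      exact core p hp r₁ h1 hr1 b c d hbc (Or.inr hb)
end
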